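/- For each t ∈ {0,1,…,T−1} and each a ∈ ℤ, the first difference ΔG_t(a,k) = G_t(a+1,k) − G_t(a,k) is non-increasing in k: if k ≤ k' then G_t(a+1,k') − G_t(a,k') ≤ G_t(a+1,k) − G_t(a,k). -/

import Mathlib

open Filter

/-- Negative Binomial pmf with real shape `r` and success probability `p`:
`NB(r,p)(z) = Γ(z+r)/(Γ(r)·z!)·p^r·(1−p)^z` for `r > 0`, and `NB(0,p)` is
the point mass at `0`. -/
noncomputable def NB (r p : ℝ) (z : ℕ) : ℝ :=
  if r = 0 then (if z = 0 then (1 : ℝ) else 0)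
  else Real.Gamma ((z : ℝ) + r) / (Real.Gamma r * (Nat.factorial z : ℝ)) * p ^ r * (1 - p) ^ z

/-- `p_t = (β0 + N·t)/(β0 + N·t + 1)`. -/
noncomputable def pt (β0 : ℝ) (N t : ℕ) : ℝ :=
  (β0 + (N : ℝ) * (t : ℝ)) / (β0 + (N : ℝ) * (t : ℝ) + 1)

/-- Expectation `E_{(Z,K)}[f(Z,K)]` with `Z ~ NB(α0+k, p_t)` and
`K ~ NB((N−1)(α0+k), p_t)` independent. -/
noncomputable def EZK (α0 β0 : ℝ) (N t k : ℕ) (f : ℕ → ℕ → ℝ) : ℝ :=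
  ∑' z : ℕ, ∑' κ : ℕ,
    NB (α0 + (k : ℝ)) (pt β0 N t) z * NB (((N : ℝ) - 1) * (α0 + (k : ℝ))) (pt β0 N t) κ * f z κ

/-- One-period cost plus cost-to-go of ordering up to level `a` at stage `(t,k)`. -/
noncomputable def G (α0 β0 : ℝ) (N : ℕ) (cv ch cb : ℝ) (W : ℕ → ℤ → ℕ → ℝ)
    (t : ℕ) (a : ℤ) (k : ℕ) : ℝ :=
  cv * (a : ℝ)
    + ch * ∑' z : ℕ, NB (α0 + (k : ℝ)) (pt β0 N t) z * max ((a : ℝ) - (z : ℝ)) 0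
    + cb * ∑' z : ℕ, NB (α0 + (k : ℝ)) (pt β0 N t) z * max ((z : ℝ) - (a : ℝ)) 0
    + EZK α0 β0 N t k (fun z κ => W (t + 1) (a - (z : ℤ)) (k + z + κ))



section NBlem
variable {r p : ℝ}

lemma NB_zero_shape (p : ℝ) (z : ℕ) : NB 0 p z = if z = 0 then 1 else 0 := by simp [NB]

lemma NB_pos (hr : 0 < r) (hp : 0 < p) (hp1 : p < 1) (z : ℕ) : 0 < NB r p z := by
  rw [NB, if_neg hr.ne']
  have h1 : 0 < Real.Gamma ((z : ℝ) + r) := Real.Gamma_pos_of_pos (by positivity)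
  have h2 : 0 < Real.Gamma r := Real.Gamma_pos_of_pos hr
  have h3 : (0:ℝ) < p ^ r := Real.rpow_pos_of_pos hp r
  have h4 : (0:ℝ) < (1 - p) ^ z := pow_pos (by linarith) z
  positivity

lemma NB_nonneg (hr : 0 ≤ r) (hp : 0 < p) (hp1 : p < 1) (z : ℕ) : 0 ≤ NB r p z := by
  rcases eq_or_lt_of_le hr with h | h
  · rw [← h, NB_zero_shape]; split <;> norm_num
  · exact (NB_pos h hp hp1 z).le

lemma NB_succ (hr : 0 < r) (z : ℕ) :
    NB r p (z + 1) = NB r p z * (((z : ℝ) + r) / ((z : ℝ) + 1)) * (1 - p) := by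
  rw [NB, NB, if_neg hr.ne', if_neg hr.ne']
  have hG : Real.Gamma ((z : ℝ) + 1 + r) = ((z : ℝ) + r) * Real.Gamma ((z : ℝ) + r) := by
    have := Real.Gamma_add_one (s := (z : ℝ) + r) (by positivity)
    rw [show (z : ℝ) + 1 + r = (z : ℝ) + r + 1 by ring, this]
  push_cast [Nat.factorial_succ]
  rw [hG]
  have h1 : Real.Gamma r ≠ 0 := (Real.Gamma_pos_of_pos hr).ne'
  have h2 : (Nat.factorial z : ℝ) ≠ 0 := by positivity
  have h3 : ((z : ℝ) + 1) ≠ 0 := by positivity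
  field_simp
  ring

lemma summable_NB_mul_linear (hr : 0 < r) (hp : 0 < p) (hp1 : p < 1) :
    Summable (fun z : ℕ => NB r p z * ((z : ℝ) + 1)) := by
  have hq0 : (0:ℝ) < 1 - p := by linarith
  apply summable_of_ratio_test_tendsto_lt_one (l := 1 - p) (by linarith)
  · exact Eventually.of_forall (fun n =>
      (mul_pos (NB_pos hr hp hp1 n) (by positivity)).ne')
  · have key : ∀ n : ℕ, ‖NB r p (n+1) * (((n+1 : ℕ):ℝ)+1)‖ / ‖NB r p n * ((n:ℝ)+1)‖
        = (1 + (r-1) * (1/((n:ℝ)+1))) * (1 + 1/((n:ℝ)+1)) * (1 - p) := by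
      intro n
      push_cast
      have h1 : ((n:ℝ) + 1) ≠ 0 := by positivity
      have hb : 0 < NB r p n := NB_pos hr hp hp1 n
      rw [Real.norm_of_nonneg (mul_nonneg (NB_pos hr hp hp1 (n+1)).le (by positivity)),
        Real.norm_of_nonneg (mul_nonneg hb.le (by positivity)), NB_succ hr]
      have hb' : NB r p n ≠ 0 := hb.ne'
      field_simp
      ring
    simp_rw [key]
    have h0 : Tendsto (fun n : ℕ => 1/((n:ℝ)+1)) atTop (nhds 0) := by
      simpa using tendsto_one_div_add_atTop_nhds_zero_nat (𝕜 := ℝ)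
    have := (((h0.const_mul (r-1)).const_add 1).mul ((h0.const_add 1))).mul_const (1-p)
    simpa using this

lemma summable_NB (hr : 0 ≤ r) (hp : 0 < p) (hp1 : p < 1) : Summable (NB r p) := by
  rcases eq_or_lt_of_le hr with h | h
  · rw [← h]
    apply summable_of_ne_finset_zero (s := {0})
    intro z hz
    simp only [Finset.mem_singleton] at hz
    simp [NB_zero_shape, hz]
  · apply Summable.of_nonneg_of_le (fun z => NB_nonneg hr hp hp1 z)
      (fun z => ?_) (summable_NB_mul_linear h hp hp1)
    nlinarith [NB_nonneg hr hp hp1 z, (Nat.cast_nonneg z : (0:ℝ) ≤ z)]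

lemma summable_NB_mul_nat (hr : 0 ≤ r) (hp : 0 < p) (hp1 : p < 1) :
    Summable (fun z : ℕ => NB r p z * (z : ℝ)) := by
  rcases eq_or_lt_of_le hr with h | h
  · rw [← h]
    apply summable_of_ne_finset_zero (s := {0})
    intro z hz
    simp only [Finset.mem_singleton] at hz
    simp [NB_zero_shape, hz]
  · apply Summable.of_nonneg_of_le
      (fun z => mul_nonneg (NB_nonneg hr hp hp1 z) (Nat.cast_nonneg z))
      (fun z => ?_) (summable_NB_mul_linear h hp hp1)
    nlinarith [NB_nonneg hr hp hp1 z, (Nat.cast_nonneg z : (0:ℝ) ≤ z)]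

end NBlem

section Conv
variable {r p : ℝ}

lemma NB_one (p : ℝ) (z : ℕ) : NB 1 p z = p * (1-p)^z := by
  rw [NB, if_neg one_ne_zero]
  rw [Real.Gamma_nat_eq_factorial, Real.Gamma_one, Real.rpow_one]
  have : (Nat.factorial z : ℝ) ≠ 0 := by positivity
  field_simp

lemma Gamma_hockey (hr : 0 < r) (z : ℕ) :
    ∑ i ∈ Finset.range (z+1), Real.Gamma ((i:ℝ) + r) / (Nat.factorial i : ℝ)
      = Real.Gamma ((z:ℝ) + r + 1) / (r * (Nat.factorial z : ℝ)) := by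
  induction z with
  | zero =>
      simp [Real.Gamma_add_one hr.ne']
      field_simp
  | succ z ih =>
      rw [Finset.sum_range_succ, ih]
      have hG : Real.Gamma ((z:ℝ) + 1 + r + 1) = ((z:ℝ) + r + 1) * Real.Gamma ((z:ℝ) + r + 1) := by
        rw [show (z:ℝ) + 1 + r + 1 = ((z:ℝ) + r + 1) + 1 by ring]
        exact Real.Gamma_add_one (by positivity)
      push_cast [Nat.factorial_succ, hG]
      have h1 : (Nat.factorial z : ℝ) ≠ 0 := by positivity
      have h2 : ((z:ℝ) + 1) ≠ 0 := by positivity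
      field_simp
      ring

lemma psNB_one (hr : 0 ≤ r) (hp : 0 < p) (hp1 : p < 1) :
    PowerSeries.mk (NB r p) * PowerSeries.mk (NB 1 p) = PowerSeries.mk (NB (r+1) p) := by
  rcases eq_or_lt_of_le hr with h | h
  · have : PowerSeries.mk (NB r p) = 1 := by
      ext n
      rw [PowerSeries.coeff_mk, ← h]
      simp [NB, PowerSeries.coeff_one]
    rw [this, one_mul, ← h, zero_add]
  · ext z
    rw [PowerSeries.coeff_mul, Finset.Nat.sum_antidiagonal_eq_sum_range_succ_mk]
    simp only [PowerSeries.coeff_mk]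
    have hΓr : Real.Gamma r ≠ 0 := (Real.Gamma_pos_of_pos h).ne'
    have key : ∀ i ∈ Finset.range (z+1), NB r p i * NB 1 p (z - i)
        = (p ^ r * p * (1-p)^z / Real.Gamma r) * (Real.Gamma ((i:ℝ) + r) / (Nat.factorial i : ℝ)) := by
      intro i hi
      have hi' : i ≤ z := Nat.lt_succ_iff.mp (Finset.mem_range.mp hi)
      rw [NB_one, NB, if_neg h.ne']
      have : (1-p)^i * (1-p)^(z-i) = (1-p)^z := by
        rw [← pow_add, Nat.add_sub_cancel' hi']
      field_simp
      linear_combination this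
    rw [Finset.sum_congr rfl key, ← Finset.mul_sum, Gamma_hockey h z]
    rw [NB, if_neg (by positivity : r + 1 ≠ 0)]
    have h1 : Real.Gamma (r+1) = r * Real.Gamma r := Real.Gamma_add_one h.ne'
    have h2 : p ^ (r+1) = p ^ r * p := by
      rw [Real.rpow_add hp, Real.rpow_one]
    rw [show (z:ℝ) + (r+1) = (z:ℝ) + r + 1 by ring, h1, h2]
    have h3 : (Nat.factorial z : ℝ) ≠ 0 := by positivity
    have h4 : r ≠ 0 := h.ne'
    field_simp

lemma psNB_nat (hr : 0 ≤ r) (hp : 0 < p) (hp1 : p < 1) (m : ℕ) :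
    PowerSeries.mk (NB r p) * PowerSeries.mk (NB (m:ℝ) p) = PowerSeries.mk (NB (r+(m:ℝ)) p) := by
  induction m with
  | zero =>
      have : PowerSeries.mk (NB ((0:ℕ):ℝ) p) = 1 := by
        ext n
        rw [PowerSeries.coeff_mk]
        simp [NB, PowerSeries.coeff_one]
      rw [this, mul_one]
      norm_num
  | succ m ih =>
      have e1 : PowerSeries.mk (NB ((m+1 : ℕ):ℝ) p) = PowerSeries.mk (NB ((m:ℝ)) p) * PowerSeries.mk (NB 1 p) := by
        rw [psNB_one (by positivity) hp hp1]
        push_cast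
        ring_nf
      rw [e1, ← mul_assoc, ih, psNB_one (by positivity) hp hp1]
      push_cast
      ring_nf

lemma NB_add_nat (hr : 0 ≤ r) (hp : 0 < p) (hp1 : p < 1) (m : ℕ) (z : ℕ) :
    NB (r + (m:ℝ)) p z = ∑ q ∈ Finset.HasAntidiagonal.antidiagonal z, NB r p q.1 * NB (m:ℝ) p q.2 := by
  have := psNB_nat hr hp hp1 m
  have h2 := congrArg (PowerSeries.coeff z) this
  rw [PowerSeries.coeff_mul] at h2
  simp only [PowerSeries.coeff_mk] at h2
  exact h2.symm

end Conv

set_option maxHeartbeats 1000000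
section TsumTools
variable {ι ι' : Type*}

lemma summable_mul_bounded (f : ι → ℝ) (g : ι' → ℝ) (hf : Summable f) (hg : Summable g)
    (hf0 : ∀ i, 0 ≤ f i) (hg0 : ∀ j, 0 ≤ g j) (φ : ι × ι' → ℝ) (C : ℝ)
    (hφ : ∀ q, |φ q| ≤ C) : Summable (fun q : ι × ι' => f q.1 * g q.2 * φ q) := by
  have h1 : Summable (fun q : ι × ι' => f q.1 * g q.2) :=
    hf.mul_of_nonneg hg hf0 hg0
  apply Summable.of_norm_bounded (h1.mul_right C)
  intro q
  rw [norm_mul, Real.norm_of_nonneg (mul_nonneg (hf0 q.1) (hg0 q.2))]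
  exact mul_le_mul_of_nonneg_left (hφ q) (mul_nonneg (hf0 q.1) (hg0 q.2))

lemma tsum_prod_mul_left (f : ι → ℝ) (g : ι' → ℝ) (hf : Summable f) (hg : Summable g)
    (hf0 : ∀ i, 0 ≤ f i) (hg0 : ∀ j, 0 ≤ g j) (ψ : ι → ℝ) (C : ℝ)
    (hψ : ∀ i, |ψ i| ≤ C) :
    ∑' q : ι × ι', f q.1 * g q.2 * ψ q.1 = (∑' j, g j) * ∑' i, f i * ψ i := by
  have hs : Summable (fun q : ι × ι' => f q.1 * g q.2 * ψ q.1) :=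
    summable_mul_bounded f g hf hg hf0 hg0 (fun q => ψ q.1) C (fun q => hψ q.1)
  rw [Summable.tsum_prod hs]
  have : ∀ i : ι, ∑' j, f i * g j * ψ i = (f i * ψ i) * ∑' j, g j := by
    intro i
    rw [← tsum_mul_left]
    exact tsum_congr fun j => by ring
  rw [tsum_congr this, tsum_mul_right]
  ring


lemma tsum_prod_mul_left_nn (f : ι → ℝ) (g : ι' → ℝ) (hg : Summable g)
    (hf0 : ∀ i, 0 ≤ f i) (hg0 : ∀ j, 0 ≤ g j) (ψ : ι → ℝ) (hψ0 : ∀ i, 0 ≤ ψ i)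
    (hfψ : Summable (fun i => f i * ψ i)) :
    (Summable fun q : ι × ι' => f q.1 * g q.2 * ψ q.1) ∧
    ∑' q : ι × ι', f q.1 * g q.2 * ψ q.1 = (∑' j, g j) * ∑' i, f i * ψ i := by
  have hs0 : Summable (fun q : ι × ι' => (f q.1 * ψ q.1) * g q.2) :=
    hfψ.mul_of_nonneg hg (fun i => mul_nonneg (hf0 i) (hψ0 i)) hg0
  have hs : Summable (fun q : ι × ι' => f q.1 * g q.2 * ψ q.1) := by
    refine hs0.congr fun q => ?_
    ring
  refine ⟨hs, ?_⟩
  rw [Summable.tsum_prod hs]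
  have : ∀ i : ι, ∑' j, f i * g j * ψ i = (f i * ψ i) * ∑' j, g j := by
    intro i
    rw [← tsum_mul_left]
    exact tsum_congr fun j => by ring
  rw [tsum_congr this, tsum_mul_right]
  ring

lemma tsum_prod_mul_right_nn (f : ι → ℝ) (g : ι' → ℝ) (hf : Summable f)
    (hf0 : ∀ i, 0 ≤ f i) (hg0 : ∀ j, 0 ≤ g j) (ψ : ι' → ℝ) (hψ0 : ∀ j, 0 ≤ ψ j)
    (hgψ : Summable (fun j => g j * ψ j)) :
    (Summable fun q : ι × ι' => f q.1 * g q.2 * ψ q.2) ∧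
    ∑' q : ι × ι', f q.1 * g q.2 * ψ q.2 = (∑' i, f i) * ∑' j, g j * ψ j := by
  have hs0 : Summable (fun q : ι × ι' => f q.1 * (g q.2 * ψ q.2)) :=
    hf.mul_of_nonneg hgψ hf0 (fun j => mul_nonneg (hg0 j) (hψ0 j))
  have hs : Summable (fun q : ι × ι' => f q.1 * g q.2 * ψ q.2) := by
    refine hs0.congr fun q => ?_
    ring
  refine ⟨hs, ?_⟩
  rw [Summable.tsum_prod hs]
  have : ∀ i : ι, ∑' j, f i * g j * ψ j = f i * ∑' j, g j * ψ j := by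
    intro i
    rw [← tsum_mul_left]
    exact tsum_congr fun j => by ring
  rw [tsum_congr this, tsum_mul_right]

end TsumTools

section ConvTools

lemma tsum_conv_eq (f g : ℕ → ℝ) (hf : Summable f) (hg : Summable g)
    (hf0 : ∀ i, 0 ≤ f i) (hg0 : ∀ j, 0 ≤ g j) (φ : ℕ → ℝ) (C : ℝ)
    (hφ : ∀ z, |φ z| ≤ C) :
    (Summable fun z : ℕ => (∑ q ∈ Finset.HasAntidiagonal.antidiagonal z, f q.1 * g q.2) * φ z) ∧
    ∑' z : ℕ, (∑ q ∈ Finset.HasAntidiagonal.antidiagonal z, f q.1 * g q.2) * φ z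
      = ∑' q : ℕ × ℕ, f q.1 * g q.2 * φ (q.1 + q.2) := by
  set H : ℕ × ℕ → ℝ := fun q => f q.1 * g q.2 * φ (q.1 + q.2) with hHdef
  have hH : Summable H :=
    summable_mul_bounded f g hf hg hf0 hg0 (fun q => φ (q.1 + q.2)) C (fun q => hφ _)
  set e := Finset.HasAntidiagonal.sigmaAntidiagonalEquivProd (A := ℕ) with he
  have hHe : Summable (H ∘ e) := e.summable_iff.mpr hH
  have hfib : ∀ n : ℕ, (∑' c : (Finset.HasAntidiagonal.antidiagonal n : Finset (ℕ × ℕ)), H (c : ℕ × ℕ))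
      = (∑ q ∈ Finset.HasAntidiagonal.antidiagonal n, f q.1 * g q.2) * φ n := by
    intro n
    rw [Finset.tsum_subtype (Finset.HasAntidiagonal.antidiagonal n) H, Finset.sum_mul]
    apply Finset.sum_congr rfl
    intro q hq
    rw [Finset.HasAntidiagonal.mem_antidiagonal] at hq
    simp only [hHdef, hq]
  constructor
  · have hs := hHe.sigma' (fun n => Summable.of_finite)
    refine hs.congr fun n => ?_
    exact hfib n
  · calc ∑' z : ℕ, (∑ q ∈ Finset.HasAntidiagonal.antidiagonal z, f q.1 * g q.2) * φ z
        = ∑' (n : ℕ) (c : (Finset.HasAntidiagonal.antidiagonal n : Finset (ℕ × ℕ))), (H ∘ e) ⟨n, c⟩ :=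
          tsum_congr fun n => (hfib n).symm
      _ = ∑' σ, (H ∘ e) σ := (Summable.tsum_sigma hHe).symm
      _ = ∑' q : ℕ × ℕ, H q := e.tsum_eq H

end ConvTools

section Mass
variable {r p : ℝ}

lemma NB_mass_one (hp : 0 < p) (hp1 : p < 1) : ∑' z : ℕ, NB 1 p z = 1 := by
  have h : ∀ z : ℕ, NB 1 p z = p * (1-p)^z := NB_one p
  rw [tsum_congr h, tsum_mul_left, tsum_geometric_of_lt_one (by linarith) (by linarith)]
  have : (1 : ℝ) - (1 - p) = p := by ring
  rw [this]
  field_simp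

lemma tsum_NB_conv_mul (hr : 0 ≤ r) (hp : 0 < p) (hp1 : p < 1) (m : ℕ) (φ : ℕ → ℝ) (C : ℝ)
    (hφ : ∀ z, |φ z| ≤ C) :
    (Summable fun z : ℕ => NB (r + (m:ℝ)) p z * φ z) ∧
    ∑' z : ℕ, NB (r + (m:ℝ)) p z * φ z
      = ∑' q : ℕ × ℕ, NB r p q.1 * NB (m:ℝ) p q.2 * φ (q.1 + q.2) := by
  have hc := tsum_conv_eq (NB r p) (NB (m:ℝ) p) (summable_NB hr hp hp1)
    (summable_NB (by positivity) hp hp1) (NB_nonneg hr hp hp1)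
    (NB_nonneg (by positivity) hp hp1) φ C hφ
  have hpt : ∀ z : ℕ, NB (r + (m:ℝ)) p z * φ z
      = (∑ q ∈ Finset.HasAntidiagonal.antidiagonal z, NB r p q.1 * NB (m:ℝ) p q.2) * φ z := by
    intro z
    rw [NB_add_nat hr hp hp1 m z]
  constructor
  · exact (summable_congr (fun z => (hpt z))).mpr hc.1
  · rw [tsum_congr hpt, hc.2]

lemma NB_mass_nat (hp : 0 < p) (hp1 : p < 1) : ∀ m : ℕ, ∑' z : ℕ, NB (m:ℝ) p z = 1 := by
  intro m
  induction m with
  | zero =>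
      simp only [Nat.cast_zero, NB_zero_shape]
      exact tsum_ite_eq 0 (fun _ => (1:ℝ))
  | succ m ih =>
      have h1 : ((m+1 : ℕ) : ℝ) = 1 + (m : ℝ) := by push_cast; ring
      rw [h1]
      have hc := tsum_NB_conv_mul (r := 1) (by norm_num) hp hp1 m (fun _ => (1:ℝ)) 1
        (fun z => by norm_num)
      have h2 : ∑' z : ℕ, NB (1 + (m:ℝ)) p z = ∑' z : ℕ, NB (1 + (m:ℝ)) p z * 1 := by
        exact tsum_congr fun z => (mul_one _).symm
      rw [h2, hc.2, tsum_prod_mul_left (NB 1 p) (NB (m:ℝ) p)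
        (summable_NB (by norm_num) hp hp1) (summable_NB (by positivity) hp hp1)
        (NB_nonneg (by norm_num) hp hp1) (NB_nonneg (by positivity) hp hp1)
        (fun _ => (1:ℝ)) 1 (fun z => by norm_num)]
      rw [ih]
      have : ∑' z : ℕ, NB 1 p z * 1 = ∑' z : ℕ, NB 1 p z := tsum_congr fun z => mul_one _
      rw [this, NB_mass_one hp hp1]
      norm_num

lemma NB_mass_add_nat (hr : 0 ≤ r) (hp : 0 < p) (hp1 : p < 1) (m : ℕ) :
    ∑' z : ℕ, NB (r + (m:ℝ)) p z = ∑' z : ℕ, NB r p z := by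
  have hc := tsum_NB_conv_mul hr hp hp1 m (fun _ => (1:ℝ)) 1 (fun z => by norm_num)
  have h2 : ∑' z : ℕ, NB (r + (m:ℝ)) p z = ∑' z : ℕ, NB (r + (m:ℝ)) p z * 1 :=
    tsum_congr fun z => (mul_one _).symm
  rw [h2, hc.2, tsum_prod_mul_left (NB r p) (NB (m:ℝ) p)
    (summable_NB hr hp hp1) (summable_NB (by positivity) hp hp1)
    (NB_nonneg hr hp hp1) (NB_nonneg (by positivity) hp hp1)
    (fun _ => (1:ℝ)) 1 (fun z => by norm_num), NB_mass_nat hp hp1 m]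
  rw [one_mul]
  exact tsum_congr fun z => mul_one _

lemma NB_succ_mul (hr : 0 < r) (hp : 0 < p) (hp1 : p < 1) (n : ℕ) :
    NB r p (n+1) * ((n:ℝ)+1) = (r * (1-p) / p) * NB (r+1) p n := by
  rw [NB, NB, if_neg hr.ne', if_neg (by positivity : r + 1 ≠ 0)]
  push_cast
  have hG : Real.Gamma ((n:ℝ) + 1 + r) = Real.Gamma ((n:ℝ) + (r+1)) := by ring_nf
  have h1 : Real.Gamma (r+1) = r * Real.Gamma r := Real.Gamma_add_one hr.ne'
  have h2 : p ^ (r+1) = p ^ r * p := by rw [Real.rpow_add hp, Real.rpow_one]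
  rw [hG, h1, h2]
  have h3 : (Nat.factorial (n+1) : ℝ) = ((n:ℝ)+1) * (Nat.factorial n : ℝ) := by
    push_cast [Nat.factorial_succ]; ring
  rw [h3]
  have g1 : Real.Gamma r ≠ 0 := (Real.Gamma_pos_of_pos hr).ne'
  have g2 : (Nat.factorial n : ℝ) ≠ 0 := by positivity
  have g3 : ((n:ℝ)+1) ≠ 0 := by positivity
  have g4 : p ≠ 0 := hp.ne'
  field_simp
  ring

lemma NB_mean (hr : 0 ≤ r) (hp : 0 < p) (hp1 : p < 1) :
    ∑' z : ℕ, NB r p z * (z:ℝ) = (r * (1-p) / p) * ∑' z : ℕ, NB r p z := by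
  rcases eq_or_lt_of_le hr with h | h
  · rw [← h]
    simp only [NB_zero_shape]
    have : ∀ z : ℕ, (if z = 0 then (1:ℝ) else 0) * (z:ℝ) = 0 := by
      intro z
      by_cases hz : z = 0
      · simp [hz]
      · simp [hz]
    rw [tsum_congr this]
    simp
  · have hs : Summable (fun z : ℕ => NB r p z * (z:ℝ)) := summable_NB_mul_nat hr hp hp1
    rw [Summable.tsum_eq_zero_add hs]
    simp only [Nat.cast_zero, mul_zero, zero_add, Nat.cast_add, Nat.cast_one]
    have hpt : ∀ n : ℕ, NB r p (n+1) * ((n:ℝ)+1) = (r * (1-p) / p) * NB (r+1) p n :=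
      NB_succ_mul h hp hp1
    rw [tsum_congr hpt, tsum_mul_left]
    have : ∑' n : ℕ, NB (r+1) p n = ∑' n : ℕ, NB r p n := by
      have := NB_mass_add_nat hr hp hp1 1
      simpa using this
    rw [this]

lemma pt_pos (β0 : ℝ) (hβ0 : 0 < β0) (N t : ℕ) : 0 < pt β0 N t := by
  unfold pt
  have h1 : (0:ℝ) < β0 + (N:ℝ) * t := by positivity
  have h2 : (0:ℝ) < β0 + (N:ℝ) * t + 1 := by positivity
  positivity

lemma pt_lt_one (β0 : ℝ) (hβ0 : 0 < β0) (N t : ℕ) : pt β0 N t < 1 := by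
  unfold pt
  have h2 : (0:ℝ) < β0 + (N:ℝ) * t + 1 := by positivity
  rw [div_lt_one h2]
  linarith

section Main

variable {α0 β0 : ℝ} {N : ℕ}

-- summability of the weighted product against a linearly growing nonneg payoff
lemma summable_prod_NB_linpay (hα0 : 0 < α0) (hβ0 : 0 < β0) (hN : 1 ≤ N)
    (s k : ℕ) (V : ℤ → ℕ → ℝ) (hV0 : ∀ x m, 0 ≤ V x m)
    (C : ℝ) (hC0 : 0 ≤ C) (hVC : ∀ (x : ℤ) (m : ℕ), V x m ≤ C * (1 + |(x:ℝ)| + m))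
    (b : ℤ) :
    Summable (fun q : ℕ × ℕ => NB (α0 + (k:ℝ)) (pt β0 N s) q.1
      * NB (((N:ℝ) - 1) * (α0 + (k:ℝ))) (pt β0 N s) q.2 * V (b - q.1) (k + q.1 + q.2)) := by
  set p := pt β0 N s with hpdef
  have hp : 0 < p := pt_pos β0 hβ0 N s
  have hp1 : p < 1 := pt_lt_one β0 hβ0 N s
  have hrμ : (0:ℝ) < α0 + k := by positivity
  have hNr : (0:ℝ) ≤ (N:ℝ) - 1 := by
    have : (1:ℝ) ≤ (N:ℝ) := by exact_mod_cast hN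
    linarith
  have hrν : (0:ℝ) ≤ ((N:ℝ) - 1) * (α0 + k) := by positivity
  have hμ := summable_NB hrμ.le hp hp1
  have hν := summable_NB hrν hp hp1
  have hμ0 := NB_nonneg hrμ.le hp hp1
  have hν0 := NB_nonneg hrν hp hp1
  have hμz := summable_NB_mul_nat hrμ.le hp hp1
  have hνz := summable_NB_mul_nat hrν hp hp1
  have hd1 : Summable (fun q : ℕ × ℕ => NB (α0 + (k:ℝ)) p q.1
      * NB (((N:ℝ)-1) * (α0 + (k:ℝ))) p q.2 * (C * (1 + |(b:ℝ)| + k))) :=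
    (hμ.mul_of_nonneg hν hμ0 hν0).mul_right _
  have hd2 : Summable (fun q : ℕ × ℕ => (NB (α0 + (k:ℝ)) p q.1 * (q.1:ℝ) * (2*C))
      * NB (((N:ℝ)-1) * (α0 + (k:ℝ))) p q.2) :=
    (hμz.mul_right (2*C)).mul_of_nonneg hν
      (fun z => mul_nonneg (mul_nonneg (hμ0 z) (Nat.cast_nonneg z)) (by positivity)) hν0
  have hd3 : Summable (fun q : ℕ × ℕ => NB (α0 + (k:ℝ)) p q.1
      * (NB (((N:ℝ)-1) * (α0 + (k:ℝ))) p q.2 * (q.2:ℝ) * C)) :=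
    hμ.mul_of_nonneg (hνz.mul_right C) hμ0
      (fun z => mul_nonneg (mul_nonneg (hν0 z) (Nat.cast_nonneg z)) hC0)
  apply Summable.of_nonneg_of_le
    (fun q => mul_nonneg (mul_nonneg (hμ0 q.1) (hν0 q.2)) (hV0 _ _))
    (fun q => ?_) ((hd1.add hd2).add hd3)
  have hVle : V (b - q.1) (k + q.1 + q.2)
      ≤ C * (1 + |(b:ℝ)| + k) + (q.1:ℝ) * (2*C) + (q.2:ℝ) * C := by
    have h1 := hVC (b - q.1) (k + q.1 + q.2)
    have h2 : |((b - q.1 : ℤ) : ℝ)| ≤ |(b:ℝ)| + q.1 := by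
      push_cast
      have := abs_sub (b:ℝ) (q.1:ℝ)
      have h0 : |(q.1:ℝ)| = (q.1:ℝ) := abs_of_nonneg (Nat.cast_nonneg _)
      linarith
    have h3 : ((k + q.1 + q.2 : ℕ) : ℝ) = (k:ℝ) + q.1 + q.2 := by push_cast; ring
    rw [h3] at h1
    nlinarith [(Nat.cast_nonneg q.1 : (0:ℝ) ≤ q.1), (Nat.cast_nonneg q.2 : (0:ℝ) ≤ q.2)]
  have hμν : 0 ≤ NB (α0 + (k:ℝ)) p q.1 * NB (((N:ℝ)-1) * (α0 + (k:ℝ))) p q.2 :=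
    mul_nonneg (hμ0 q.1) (hν0 q.2)
  calc NB (α0 + (k:ℝ)) p q.1 * NB (((N:ℝ)-1) * (α0 + (k:ℝ))) p q.2 * V (b - q.1) (k + q.1 + q.2)
      ≤ NB (α0 + (k:ℝ)) p q.1 * NB (((N:ℝ)-1) * (α0 + (k:ℝ))) p q.2
        * (C * (1 + |(b:ℝ)| + k) + (q.1:ℝ) * (2*C) + (q.2:ℝ) * C) :=
        mul_le_mul_of_nonneg_left hVle hμν
    _ = NB (α0 + (k:ℝ)) p q.1 * NB (((N:ℝ)-1) * (α0 + (k:ℝ))) p q.2 * (C * (1 + |(b:ℝ)| + k))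
        + (NB (α0 + (k:ℝ)) p q.1 * (q.1:ℝ) * (2*C)) * NB (((N:ℝ)-1) * (α0 + (k:ℝ))) p q.2
        + NB (α0 + (k:ℝ)) p q.1 * (NB (((N:ℝ)-1) * (α0 + (k:ℝ))) p q.2 * (q.2:ℝ) * C) := by
        ring

end Main

section Main2

variable {r p : ℝ}

lemma summable_NB_max_left (hr : 0 ≤ r) (hp : 0 < p) (hp1 : p < 1) (c : ℝ) :
    Summable (fun z : ℕ => NB r p z * max (c - (z:ℝ)) 0) := by
  apply summable_of_ne_finset_zero (s := Finset.range (Nat.ceil (max c 0) + 1))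
  intro z hz
  rw [Finset.mem_range, not_lt] at hz
  have h1 : (Nat.ceil (max c 0) : ℝ) + 1 ≤ (z:ℝ) := by exact_mod_cast hz
  have h2 : c ≤ (Nat.ceil (max c 0) : ℝ) := le_trans (le_max_left _ _) (Nat.le_ceil _)
  have : max (c - (z:ℝ)) 0 = 0 := max_eq_right (by linarith)
  rw [this, mul_zero]

lemma summable_NB_max_right (hr : 0 ≤ r) (hp : 0 < p) (hp1 : p < 1) (c : ℝ) :
    Summable (fun z : ℕ => NB r p z * max ((z:ℝ) - c) 0) := by
  have hdom : Summable (fun z : ℕ => NB r p z * (z:ℝ) + NB r p z * |c|) :=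
    (summable_NB_mul_nat hr hp hp1).add ((summable_NB hr hp hp1).mul_right |c|)
  apply Summable.of_nonneg_of_le
    (fun z => mul_nonneg (NB_nonneg hr hp hp1 z) (le_max_right _ _)) (fun z => ?_) hdom
  have h1 : max ((z:ℝ) - c) 0 ≤ (z:ℝ) + |c| := by
    apply max_le
    · have := neg_abs_le c
      linarith
    · positivity
  calc NB r p z * max ((z:ℝ) - c) 0 ≤ NB r p z * ((z:ℝ) + |c|) :=
        mul_le_mul_of_nonneg_left h1 (NB_nonneg hr hp hp1 z)
    _ = NB r p z * (z:ℝ) + NB r p z * |c| := by ring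

end Main2

section Main3

variable {α0 β0 : ℝ} {N : ℕ}

lemma G_diff_eq (hα0 : 0 < α0) (hβ0 : 0 < β0) (hN : 1 ≤ N)
    (cv ch cb : ℝ) (W : ℕ → ℤ → ℕ → ℝ) (s : ℕ)
    (hV0 : ∀ x m, 0 ≤ W (s+1) x m)
    (C : ℝ) (hC0 : 0 ≤ C) (hVC : ∀ (x : ℤ) (m : ℕ), W (s+1) x m ≤ C * (1 + |(x:ℝ)| + m))
    (a : ℤ) (k : ℕ) :
    G α0 β0 N cv ch cb W s (a+1) k - G α0 β0 N cv ch cb W s a k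
      = cv + ch * (∑' z : ℕ, NB (α0 + (k:ℝ)) (pt β0 N s) z * (if (z:ℤ) ≤ a then (1:ℝ) else 0))
        + cb * ((∑' z : ℕ, NB (α0 + (k:ℝ)) (pt β0 N s) z * (if (z:ℤ) ≤ a then (1:ℝ) else 0))
            - ∑' z : ℕ, NB (α0 + (k:ℝ)) (pt β0 N s) z)
        + ∑' q : ℕ × ℕ, NB (α0 + (k:ℝ)) (pt β0 N s) q.1
            * NB (((N:ℝ)-1) * (α0 + (k:ℝ))) (pt β0 N s) q.2
            * (W (s+1) (a - q.1 + 1) (k + q.1 + q.2) - W (s+1) (a - q.1) (k + q.1 + q.2)) := by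
  have hp : 0 < pt β0 N s := pt_pos β0 hβ0 N s
  have hp1 : pt β0 N s < 1 := pt_lt_one β0 hβ0 N s
  set p := pt β0 N s
  have hrμ : (0:ℝ) ≤ α0 + k := by positivity
  have hμ0 := NB_nonneg hrμ hp hp1
  have hμ := summable_NB hrμ hp hp1
  -- ch part
  have hch1 : Summable (fun z : ℕ => NB (α0 + (k:ℝ)) p z * max (((a+1 : ℤ):ℝ) - (z:ℝ)) 0) :=
    summable_NB_max_left hrμ hp hp1 _
  have hch0 : Summable (fun z : ℕ => NB (α0 + (k:ℝ)) p z * max (((a : ℤ):ℝ) - (z:ℝ)) 0) :=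
    summable_NB_max_left hrμ hp hp1 _
  have dch : (∑' z : ℕ, NB (α0 + (k:ℝ)) p z * max (((a+1 : ℤ):ℝ) - (z:ℝ)) 0)
      - (∑' z : ℕ, NB (α0 + (k:ℝ)) p z * max (((a : ℤ):ℝ) - (z:ℝ)) 0)
      = ∑' z : ℕ, NB (α0 + (k:ℝ)) p z * (if (z:ℤ) ≤ a then (1:ℝ) else 0) := by
    rw [← Summable.tsum_sub hch1 hch0]
    apply tsum_congr
    intro z
    by_cases hz : (z:ℤ) ≤ a
    · have hz' : (z:ℝ) ≤ (a:ℝ) := by exact_mod_cast hz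
      rw [if_pos hz, max_eq_left (by push_cast; linarith), max_eq_left (by linarith)]
      push_cast
      ring
    · push_neg at hz
      have hz2 : a + 1 ≤ (z:ℤ) := hz
      have hz' : (a:ℝ) + 1 ≤ (z:ℝ) := by exact_mod_cast hz2
      rw [if_neg (not_le.mpr hz), max_eq_right (by push_cast; linarith),
        max_eq_right (by linarith)]
      ring
  -- cb part
  have hcb1 : Summable (fun z : ℕ => NB (α0 + (k:ℝ)) p z * max ((z:ℝ) - ((a+1 : ℤ):ℝ)) 0) :=
    summable_NB_max_right hrμ hp hp1 _
  have hcb0 : Summable (fun z : ℕ => NB (α0 + (k:ℝ)) p z * max ((z:ℝ) - ((a : ℤ):ℝ)) 0) :=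
    summable_NB_max_right hrμ hp hp1 _
  have dcb : (∑' z : ℕ, NB (α0 + (k:ℝ)) p z * max ((z:ℝ) - ((a+1 : ℤ):ℝ)) 0)
      - (∑' z : ℕ, NB (α0 + (k:ℝ)) p z * max ((z:ℝ) - ((a : ℤ):ℝ)) 0)
      = (∑' z : ℕ, NB (α0 + (k:ℝ)) p z * (if (z:ℤ) ≤ a then (1:ℝ) else 0))
        - ∑' z : ℕ, NB (α0 + (k:ℝ)) p z := by
    have hki : Summable (fun z : ℕ => NB (α0 + (k:ℝ)) p z * (if (z:ℤ) ≤ a then (1:ℝ) else 0)) := by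
      apply Summable.of_nonneg_of_le (fun z => ?_) (fun z => ?_) hμ
      · apply mul_nonneg (hμ0 z)
        split <;> norm_num
      · by_cases hz : (z:ℤ) ≤ a
        · rw [if_pos hz, mul_one]
        · rw [if_neg hz, mul_zero]
          exact hμ0 z
    rw [← Summable.tsum_sub hcb1 hcb0, ← Summable.tsum_sub hki hμ]
    apply tsum_congr
    intro z
    by_cases hz : (z:ℤ) ≤ a
    · have hz' : (z:ℝ) ≤ (a:ℝ) := by exact_mod_cast hz
      rw [if_pos hz, max_eq_right (by push_cast; linarith), max_eq_right (by linarith)]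
      ring
    · push_neg at hz
      have hz2 : a + 1 ≤ (z:ℤ) := hz
      have hz' : (a:ℝ) + 1 ≤ (z:ℝ) := by exact_mod_cast hz2
      rw [if_neg (not_le.mpr hz), max_eq_left (by push_cast; linarith),
        max_eq_left (by linarith)]
      push_cast
      ring
  -- EZK part
  have hF1 : Summable (fun q : ℕ × ℕ => NB (α0 + (k:ℝ)) p q.1
      * NB (((N:ℝ)-1) * (α0 + (k:ℝ))) p q.2 * W (s+1) ((a+1) - q.1) (k + q.1 + q.2)) :=
    summable_prod_NB_linpay hα0 hβ0 hN s k (W (s+1)) hV0 C hC0 hVC (a+1)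
  have hF0 : Summable (fun q : ℕ × ℕ => NB (α0 + (k:ℝ)) p q.1
      * NB (((N:ℝ)-1) * (α0 + (k:ℝ))) p q.2 * W (s+1) (a - q.1) (k + q.1 + q.2)) :=
    summable_prod_NB_linpay hα0 hβ0 hN s k (W (s+1)) hV0 C hC0 hVC a
  have hE1 : EZK α0 β0 N s k (fun z κ => W (s+1) ((a+1) - (z:ℤ)) (k + z + κ))
      = ∑' q : ℕ × ℕ, NB (α0 + (k:ℝ)) p q.1
        * NB (((N:ℝ)-1) * (α0 + (k:ℝ))) p q.2 * W (s+1) ((a+1) - q.1) (k + q.1 + q.2) :=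
    (Summable.tsum_prod hF1).symm
  have hE0 : EZK α0 β0 N s k (fun z κ => W (s+1) (a - (z:ℤ)) (k + z + κ))
      = ∑' q : ℕ × ℕ, NB (α0 + (k:ℝ)) p q.1
        * NB (((N:ℝ)-1) * (α0 + (k:ℝ))) p q.2 * W (s+1) (a - q.1) (k + q.1 + q.2) :=
    (Summable.tsum_prod hF0).symm
  have dE : EZK α0 β0 N s k (fun z κ => W (s+1) ((a+1) - (z:ℤ)) (k + z + κ))
      - EZK α0 β0 N s k (fun z κ => W (s+1) (a - (z:ℤ)) (k + z + κ))
      = ∑' q : ℕ × ℕ, NB (α0 + (k:ℝ)) p q.1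
            * NB (((N:ℝ)-1) * (α0 + (k:ℝ))) p q.2
            * (W (s+1) (a - q.1 + 1) (k + q.1 + q.2) - W (s+1) (a - q.1) (k + q.1 + q.2)) := by
    rw [hE1, hE0, ← Summable.tsum_sub hF1 hF0]
    apply tsum_congr
    intro q
    have harg : a + 1 - (q.1 : ℤ) = a - q.1 + 1 := by ring
    rw [harg]
    ring
  -- assemble
  unfold G
  have hcast : ((a+1 : ℤ):ℝ) = (a:ℝ) + 1 := by push_cast; ring
  linear_combination ch * dch + cb * dcb + dE + cv * hcast

end Main3
section Main4
variable {α0 β0 : ℝ} {N : ℕ}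

lemma ind_nonneg (a : ℤ) (z : ℕ) : (0:ℝ) ≤ (if (z:ℤ) ≤ a then (1:ℝ) else 0) := by
  split <;> norm_num

lemma ind_abs_le (a : ℤ) (z : ℕ) : |if (z:ℤ) ≤ a then (1:ℝ) else 0| ≤ 1 := by
  split <;> simp

lemma A1_mono (hα0 : 0 < α0) (hβ0 : 0 < β0) (hN : 1 ≤ N) (s : ℕ)
    (a a' : ℤ) (k k' : ℕ) (ha : a ≤ a') (hk : k ≤ k') :
    ∑' z : ℕ, NB (α0 + (k':ℝ)) (pt β0 N s) z * (if (z:ℤ) ≤ a then (1:ℝ) else 0)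
      ≤ ∑' z : ℕ, NB (α0 + (k:ℝ)) (pt β0 N s) z * (if (z:ℤ) ≤ a' then (1:ℝ) else 0) := by
  have hp : 0 < pt β0 N s := pt_pos β0 hβ0 N s
  have hp1 : pt β0 N s < 1 := pt_lt_one β0 hβ0 N s
  set p := pt β0 N s
  set d : ℕ := k' - k with hd
  have hkd : k' = k + d := by omega
  have hrμ : (0:ℝ) ≤ α0 + k := by positivity
  have hcast : α0 + (k':ℝ) = (α0 + (k:ℝ)) + (d:ℝ) := by
    rw [hkd]; push_cast; ring
  have hconv := tsum_NB_conv_mul hrμ hp hp1 d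
    (fun z => (if (z:ℤ) ≤ a then (1:ℝ) else 0)) 1 (fun z => ind_abs_le a z)
  rw [hcast, hconv.2]
  -- compare with indicator at a' on first coordinate
  have hsum1 : Summable (fun q : ℕ × ℕ => NB (α0 + (k:ℝ)) p q.1 * NB (d:ℝ) p q.2
      * (if ((q.1 + q.2 : ℕ):ℤ) ≤ a then (1:ℝ) else 0)) :=
    summable_mul_bounded _ _ (summable_NB hrμ hp hp1) (summable_NB (by positivity) hp hp1)
      (NB_nonneg hrμ hp hp1) (NB_nonneg (by positivity) hp hp1) _ 1
      (fun q => ind_abs_le a _)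
  have hsum2 : Summable (fun q : ℕ × ℕ => NB (α0 + (k:ℝ)) p q.1 * NB (d:ℝ) p q.2
      * (if ((q.1 : ℕ):ℤ) ≤ a' then (1:ℝ) else 0)) :=
    summable_mul_bounded _ _ (summable_NB hrμ hp hp1) (summable_NB (by positivity) hp hp1)
      (NB_nonneg hrμ hp hp1) (NB_nonneg (by positivity) hp hp1) _ 1
      (fun q => ind_abs_le a' _)
  have hle : ∑' q : ℕ × ℕ, NB (α0 + (k:ℝ)) p q.1 * NB (d:ℝ) p q.2
      * (if ((q.1 + q.2 : ℕ):ℤ) ≤ a then (1:ℝ) else 0)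
      ≤ ∑' q : ℕ × ℕ, NB (α0 + (k:ℝ)) p q.1 * NB (d:ℝ) p q.2
      * (if ((q.1 : ℕ):ℤ) ≤ a' then (1:ℝ) else 0) := by
    apply Summable.tsum_le_tsum _ hsum1 hsum2
    intro q
    apply mul_le_mul_of_nonneg_left _ (mul_nonneg (NB_nonneg hrμ hp hp1 q.1)
      (NB_nonneg (by positivity) hp hp1 q.2))
    by_cases hq : ((q.1 + q.2 : ℕ):ℤ) ≤ a
    · have : ((q.1 : ℕ):ℤ) ≤ a' := by
        push_cast at hq ⊢
        omega
      rw [if_pos hq, if_pos this]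
    · rw [if_neg hq]
      exact ind_nonneg a' q.1
  refine hle.trans ?_
  rw [tsum_prod_mul_left (NB (α0 + (k:ℝ)) p) (NB (d:ℝ) p) (summable_NB hrμ hp hp1)
    (summable_NB (by positivity) hp hp1) (NB_nonneg hrμ hp hp1)
    (NB_nonneg (by positivity) hp hp1) _ 1 (fun z => ind_abs_le a' z),
    NB_mass_nat hp hp1 d, one_mul]

end Main4
section Main5
variable {α0 β0 : ℝ} {N : ℕ}

lemma abs_tsum_le_of_le {f g : ℕ → ℝ} (hg : Summable g) (h : ∀ i, |f i| ≤ g i) :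
    |∑' i, f i| ≤ ∑' i, g i := by
  have habs : Summable (fun i => |f i|) :=
    Summable.of_nonneg_of_le (fun i => abs_nonneg _) h hg
  calc |∑' i, f i| ≤ ∑' i, |f i| := by
        simpa [Real.norm_eq_abs] using norm_tsum_le_tsum_norm (f := f) (by simpa [Real.norm_eq_abs] using habs)
    _ ≤ ∑' i, g i := Summable.tsum_le_tsum h habs hg

lemma A3_mono (hα0 : 0 < α0) (hβ0 : 0 < β0) (hN : 1 ≤ N)
    (W : ℕ → ℤ → ℕ → ℝ) (s : ℕ)
    (B : ℝ) (hB0 : 0 ≤ B)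
    (hVB : ∀ (x : ℤ) (m : ℕ), |W (s+1) (x+1) m - W (s+1) x m| ≤ B)
    (hVmono : ∀ (x x' : ℤ) (m m' : ℕ), x ≤ x' → m ≤ m' →
      W (s+1) (x+1) m' - W (s+1) x m' ≤ W (s+1) (x'+1) m - W (s+1) x' m)
    (a a' : ℤ) (k k' : ℕ) (ha : a ≤ a') (hk : k ≤ k') :
    ∑' q : ℕ × ℕ, NB (α0 + (k':ℝ)) (pt β0 N s) q.1
        * NB (((N:ℝ)-1) * (α0 + (k':ℝ))) (pt β0 N s) q.2
        * (W (s+1) (a - q.1 + 1) (k' + q.1 + q.2) - W (s+1) (a - q.1) (k' + q.1 + q.2))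
      ≤ ∑' q : ℕ × ℕ, NB (α0 + (k:ℝ)) (pt β0 N s) q.1
        * NB (((N:ℝ)-1) * (α0 + (k:ℝ))) (pt β0 N s) q.2
        * (W (s+1) (a' - q.1 + 1) (k + q.1 + q.2) - W (s+1) (a' - q.1) (k + q.1 + q.2)) := by
  have hp : 0 < pt β0 N s := pt_pos β0 hβ0 N s
  have hp1 : pt β0 N s < 1 := pt_lt_one β0 hβ0 N s
  set p := pt β0 N s
  set d : ℕ := k' - k with hd
  have hkd : k' = k + d := by omega
  set e : ℕ := (N - 1) * d with he
  have hrμ : (0:ℝ) ≤ α0 + k := by positivity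
  have hrμ' : (0:ℝ) ≤ α0 + k' := by positivity
  have hNr : (0:ℝ) ≤ (N:ℝ) - 1 := by
    have : (1:ℝ) ≤ (N:ℝ) := by exact_mod_cast hN
    linarith
  have hrν : (0:ℝ) ≤ ((N:ℝ)-1) * (α0 + k) := by positivity
  have hrν' : (0:ℝ) ≤ ((N:ℝ)-1) * (α0 + k') := by positivity
  have hμcast : α0 + (k':ℝ) = (α0 + (k:ℝ)) + (d:ℝ) := by rw [hkd]; push_cast; ring
  have hνcast : ((N:ℝ)-1) * (α0 + (k':ℝ)) = ((N:ℝ)-1) * (α0 + (k:ℝ)) + (e:ℝ) := by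
    rw [hkd, he]
    push_cast [Nat.cast_sub hN]
    ring
  -- payoff functions
  set Φ : ℕ → ℕ → ℝ := fun z κ =>
    W (s+1) (a - z + 1) (k' + z + κ) - W (s+1) (a - z) (k' + z + κ) with hΦdef
  set Ψ : ℕ → ℕ → ℝ := fun z κ =>
    W (s+1) (a' - z + 1) (k + z + κ) - W (s+1) (a' - z) (k + z + κ) with hΨdef
  have hΦB : ∀ z κ, |Φ z κ| ≤ B := fun z κ => hVB (a - z) (k' + z + κ)
  have hΨB : ∀ z κ, |Ψ z κ| ≤ B := fun z κ => hVB (a' - z) (k + z + κ)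
  -- summability of basic families
  have hμS := summable_NB hrμ hp hp1
  have hμ'S := summable_NB hrμ' hp hp1
  have hνS := summable_NB hrν hp hp1
  have hν'S := summable_NB hrν' hp hp1
  have hγS := summable_NB (r := (d:ℝ)) (by positivity) hp hp1
  have hδS := summable_NB (r := (e:ℝ)) (by positivity) hp hp1
  have hμ0 := NB_nonneg hrμ hp hp1
  have hμ'0 := NB_nonneg hrμ' hp hp1
  have hν0 := NB_nonneg hrν hp hp1
  have hν'0 := NB_nonneg hrν' hp hp1
  have hγ0 := NB_nonneg (r := (d:ℝ)) (by positivity) hp hp1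
  have hδ0 := NB_nonneg (r := (e:ℝ)) (by positivity) hp hp1
  -- masses
  set Sν' : ℝ := ∑' κ : ℕ, NB (((N:ℝ)-1) * (α0 + (k':ℝ))) p κ with hSν'
  set Sν : ℝ := ∑' κ : ℕ, NB (((N:ℝ)-1) * (α0 + (k:ℝ))) p κ with hSν
  have hSν'0 : 0 ≤ Sν' := tsum_nonneg hν'0
  have hSν0 : 0 ≤ Sν := tsum_nonneg hν0
  -- inner sums
  set I : ℕ → ℝ := fun z => ∑' κ : ℕ, NB (((N:ℝ)-1) * (α0 + (k':ℝ))) p κ * Φ z κ with hIdef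
  set K : ℕ → ℝ := fun z => ∑' κ : ℕ, NB (((N:ℝ)-1) * (α0 + (k:ℝ))) p κ * Ψ z κ with hKdef
  have hIB : ∀ z, |I z| ≤ B * Sν' := by
    intro z
    have h1 : |I z| ≤ ∑' κ : ℕ, NB (((N:ℝ)-1) * (α0 + (k':ℝ))) p κ * B := by
      apply abs_tsum_le_of_le (hν'S.mul_right B)
      intro κ
      rw [abs_mul, abs_of_nonneg (hν'0 κ)]
      exact mul_le_mul_of_nonneg_left (hΦB z κ) (hν'0 κ)
    rw [tsum_mul_right] at h1
    calc |I z| ≤ Sν' * B := h1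
      _ = B * Sν' := by ring
  have hKB : ∀ z, |K z| ≤ B * Sν := by
    intro z
    have h1 : |K z| ≤ ∑' κ : ℕ, NB (((N:ℝ)-1) * (α0 + (k:ℝ))) p κ * B := by
      apply abs_tsum_le_of_le (hνS.mul_right B)
      intro κ
      rw [abs_mul, abs_of_nonneg (hν0 κ)]
      exact mul_le_mul_of_nonneg_left (hΨB z κ) (hν0 κ)
    rw [tsum_mul_right] at h1
    calc |K z| ≤ Sν * B := h1
      _ = B * Sν := by ring
  -- nesting of LHS
  have hL : Summable (fun q : ℕ × ℕ => NB (α0 + (k':ℝ)) p q.1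
      * NB (((N:ℝ)-1) * (α0 + (k':ℝ))) p q.2 * Φ q.1 q.2) :=
    summable_mul_bounded _ _ hμ'S hν'S hμ'0 hν'0 _ B (fun q => hΦB q.1 q.2)
  have hnestL : ∑' q : ℕ × ℕ, NB (α0 + (k':ℝ)) p q.1
      * NB (((N:ℝ)-1) * (α0 + (k':ℝ))) p q.2 * Φ q.1 q.2
      = ∑' z : ℕ, NB (α0 + (k':ℝ)) p z * I z := by
    rw [Summable.tsum_prod hL]
    apply tsum_congr
    intro z
    rw [hIdef, ← tsum_mul_left]
    exact tsum_congr fun κ => mul_assoc _ _ _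
  -- convolution on inner index
  have hIconv : ∀ z : ℕ, I z = ∑' u : ℕ × ℕ, NB (((N:ℝ)-1) * (α0 + (k:ℝ))) p u.1
      * NB (e:ℝ) p u.2 * Φ z (u.1 + u.2) := by
    intro z
    rw [hIdef]
    simp only [hνcast]
    exact (tsum_NB_conv_mul hrν hp hp1 e (Φ z) B (hΦB z)).2
  -- convolution on outer index
  have houter : ∑' z : ℕ, NB (α0 + (k':ℝ)) p z * I z
      = ∑' w : ℕ × ℕ, NB (α0 + (k:ℝ)) p w.1 * NB (d:ℝ) p w.2 * I (w.1 + w.2) := by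
    simp only [hμcast]
    exact (tsum_NB_conv_mul hrμ hp hp1 d I (B * Sν') hIB).2
  -- pointwise comparison of inner sums
  have hIK : ∀ w : ℕ × ℕ, I (w.1 + w.2) ≤ K w.1 := by
    intro w
    rw [hIconv (w.1 + w.2)]
    have hleft : Summable (fun u : ℕ × ℕ => NB (((N:ℝ)-1) * (α0 + (k:ℝ))) p u.1
        * NB (e:ℝ) p u.2 * Φ (w.1 + w.2) (u.1 + u.2)) :=
      summable_mul_bounded _ _ hνS hδS hν0 hδ0 _ B (fun u => hΦB _ _)
    have hright : Summable (fun u : ℕ × ℕ => NB (((N:ℝ)-1) * (α0 + (k:ℝ))) p u.1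
        * NB (e:ℝ) p u.2 * Ψ w.1 u.1) :=
      summable_mul_bounded _ _ hνS hδS hν0 hδ0 _ B (fun u => hΨB _ _)
    have hcomp : ∑' u : ℕ × ℕ, NB (((N:ℝ)-1) * (α0 + (k:ℝ))) p u.1
        * NB (e:ℝ) p u.2 * Φ (w.1 + w.2) (u.1 + u.2)
        ≤ ∑' u : ℕ × ℕ, NB (((N:ℝ)-1) * (α0 + (k:ℝ))) p u.1
        * NB (e:ℝ) p u.2 * Ψ w.1 u.1 := by
      apply Summable.tsum_le_tsum _ hleft hright
      intro u
      apply mul_le_mul_of_nonneg_left _ (mul_nonneg (hν0 u.1) (hδ0 u.2))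
      rw [hΦdef, hΨdef]
      apply hVmono
      · push_cast
        omega
      · omega
    refine hcomp.trans ?_
    rw [tsum_prod_mul_left (NB (((N:ℝ)-1) * (α0 + (k:ℝ))) p) (NB (e:ℝ) p) hνS hδS hν0 hδ0
      (Ψ w.1) B (hΨB w.1), NB_mass_nat hp hp1 e, one_mul]
  -- compare the outer sums
  have houtle : ∑' w : ℕ × ℕ, NB (α0 + (k:ℝ)) p w.1 * NB (d:ℝ) p w.2 * I (w.1 + w.2)
      ≤ ∑' w : ℕ × ℕ, NB (α0 + (k:ℝ)) p w.1 * NB (d:ℝ) p w.2 * K w.1 := by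
    apply Summable.tsum_le_tsum _
      (summable_mul_bounded _ _ hμS hγS hμ0 hγ0 _ (B * Sν') (fun w => hIB _))
      (summable_mul_bounded _ _ hμS hγS hμ0 hγ0 _ (B * Sν) (fun w => hKB _))
    intro w
    exact mul_le_mul_of_nonneg_left (hIK w) (mul_nonneg (hμ0 w.1) (hγ0 w.2))
  -- collapse the γ mass
  have hcollapse : ∑' w : ℕ × ℕ, NB (α0 + (k:ℝ)) p w.1 * NB (d:ℝ) p w.2 * K w.1
      = ∑' z : ℕ, NB (α0 + (k:ℝ)) p z * K z := by
    rw [tsum_prod_mul_left (NB (α0 + (k:ℝ)) p) (NB (d:ℝ) p) hμS hγS hμ0 hγ0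
      K (B * Sν) hKB, NB_mass_nat hp hp1 d, one_mul]
  -- nesting of RHS
  have hR : Summable (fun q : ℕ × ℕ => NB (α0 + (k:ℝ)) p q.1
      * NB (((N:ℝ)-1) * (α0 + (k:ℝ))) p q.2 * Ψ q.1 q.2) :=
    summable_mul_bounded _ _ hμS hνS hμ0 hν0 _ B (fun q => hΨB q.1 q.2)
  have hnestR : ∑' q : ℕ × ℕ, NB (α0 + (k:ℝ)) p q.1
      * NB (((N:ℝ)-1) * (α0 + (k:ℝ))) p q.2 * Ψ q.1 q.2
      = ∑' z : ℕ, NB (α0 + (k:ℝ)) p z * K z := by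
    rw [Summable.tsum_prod hR]
    apply tsum_congr
    intro z
    rw [hKdef, ← tsum_mul_left]
    exact tsum_congr fun κ => mul_assoc _ _ _
  calc ∑' q : ℕ × ℕ, NB (α0 + (k':ℝ)) p q.1
        * NB (((N:ℝ)-1) * (α0 + (k':ℝ))) p q.2
        * (W (s+1) (a - q.1 + 1) (k' + q.1 + q.2) - W (s+1) (a - q.1) (k' + q.1 + q.2))
      = ∑' z : ℕ, NB (α0 + (k':ℝ)) p z * I z := hnestL
    _ = ∑' w : ℕ × ℕ, NB (α0 + (k:ℝ)) p w.1 * NB (d:ℝ) p w.2 * I (w.1 + w.2) := houter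
    _ ≤ ∑' w : ℕ × ℕ, NB (α0 + (k:ℝ)) p w.1 * NB (d:ℝ) p w.2 * K w.1 := houtle
    _ = ∑' z : ℕ, NB (α0 + (k:ℝ)) p z * K z := hcollapse
    _ = ∑' q : ℕ × ℕ, NB (α0 + (k:ℝ)) p q.1
        * NB (((N:ℝ)-1) * (α0 + (k:ℝ))) p q.2
        * (W (s+1) (a' - q.1 + 1) (k + q.1 + q.2) - W (s+1) (a' - q.1) (k + q.1 + q.2)) :=
        hnestR.symm

end Main5
section Main6
variable {ι ι' : Type*}

lemma abs_tsum_le_of_le' {f g : ι → ℝ} (hg : Summable g) (h : ∀ i, |f i| ≤ g i) :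
    |∑' i, f i| ≤ ∑' i, g i := by
  have habs : Summable (fun i => |f i|) :=
    Summable.of_nonneg_of_le (fun i => abs_nonneg _) h hg
  calc |∑' i, f i| ≤ ∑' i, |f i| := by
        simpa [Real.norm_eq_abs] using norm_tsum_le_tsum_norm (f := f)
          (by simpa [Real.norm_eq_abs] using habs)
    _ ≤ ∑' i, g i := Summable.tsum_le_tsum h habs hg

lemma tsum_prod_mul (f : ι → ℝ) (g : ι' → ℝ) (hf : Summable f) (hg : Summable g)
    (hf0 : ∀ i, 0 ≤ f i) (hg0 : ∀ j, 0 ≤ g j) :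
    ∑' q : ι × ι', f q.1 * g q.2 = (∑' i, f i) * (∑' j, g j) := by
  rw [Summable.tsum_prod (hf.mul_of_nonneg hg hf0 hg0)]
  have : ∀ i : ι, ∑' j, f i * g j = f i * ∑' j, g j := fun i => tsum_mul_left
  rw [tsum_congr this, tsum_mul_right]

end Main6

section Main7
variable {α0 β0 : ℝ} {N : ℕ}

lemma bridge (hα0 : 0 < α0) (hβ0 : 0 < β0) (hN : 1 ≤ N)
    (cv ch cb : ℝ) (hcv : 0 ≤ cv) (hch : 0 < ch) (hcb : 0 < cb)
    (W : ℕ → ℤ → ℕ → ℝ) (s : ℕ)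
    (hV0 : ∀ x m, 0 ≤ W (s+1) x m)
    (C : ℝ) (hC0 : 0 ≤ C) (hVC : ∀ (x : ℤ) (m : ℕ), W (s+1) x m ≤ C * (1 + |(x:ℝ)| + m))
    (B : ℝ) (hB0 : 0 ≤ B)
    (hVB : ∀ (x : ℤ) (m : ℕ), |W (s+1) (x+1) m - W (s+1) x m| ≤ B)
    (hVmono : ∀ (x x' : ℤ) (m m' : ℕ), x ≤ x' → m ≤ m' →
      W (s+1) (x+1) m' - W (s+1) x m' ≤ W (s+1) (x'+1) m - W (s+1) x' m) :
    (∀ (a a' : ℤ) (k k' : ℕ), a ≤ a' → k ≤ k' →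
      G α0 β0 N cv ch cb W s (a+1) k' - G α0 β0 N cv ch cb W s a k'
        ≤ G α0 β0 N cv ch cb W s (a'+1) k - G α0 β0 N cv ch cb W s a' k) ∧
    (∃ Bg : ℝ, 0 ≤ Bg ∧ ∀ (a : ℤ) (k : ℕ),
      |G α0 β0 N cv ch cb W s (a+1) k - G α0 β0 N cv ch cb W s a k| ≤ Bg) := by
  have hp : 0 < pt β0 N s := pt_pos β0 hβ0 N s
  have hp1 : pt β0 N s < 1 := pt_lt_one β0 hβ0 N s
  set p := pt β0 N s with hpdef
  have hNr : (0:ℝ) ≤ (N:ℝ) - 1 := by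
    have : (1:ℝ) ≤ (N:ℝ) := by exact_mod_cast hN
    linarith
  set M0 : ℝ := ∑' z : ℕ, NB α0 p z with hM0def
  set Sν0 : ℝ := ∑' z : ℕ, NB (((N:ℝ)-1) * α0) p z with hSν0def
  have hM0 : 0 ≤ M0 := tsum_nonneg (NB_nonneg hα0.le hp hp1)
  have hSν0' : 0 ≤ Sν0 := tsum_nonneg (NB_nonneg (by positivity) hp hp1)
  have hMk : ∀ k : ℕ, ∑' z : ℕ, NB (α0 + (k:ℝ)) p z = M0 := fun k =>
    NB_mass_add_nat hα0.le hp hp1 k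
  have hSνk : ∀ k : ℕ, ∑' z : ℕ, NB (((N:ℝ)-1) * (α0 + (k:ℝ))) p z = Sν0 := by
    intro k
    have hcast : ((N:ℝ)-1) * (α0 + (k:ℝ)) = ((N:ℝ)-1) * α0 + (((N-1)*k : ℕ):ℝ) := by
      push_cast [Nat.cast_sub hN]
      ring
    rw [hcast]
    exact NB_mass_add_nat (by positivity) hp hp1 ((N-1)*k)
  -- A1 bounds
  have hA1bnd : ∀ (a : ℤ) (k : ℕ),
      0 ≤ (∑' z : ℕ, NB (α0 + (k:ℝ)) p z * (if (z:ℤ) ≤ a then (1:ℝ) else 0)) ∧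
      (∑' z : ℕ, NB (α0 + (k:ℝ)) p z * (if (z:ℤ) ≤ a then (1:ℝ) else 0)) ≤ M0 := by
    intro a k
    have hrμ : (0:ℝ) ≤ α0 + k := by positivity
    have hμS := summable_NB hrμ hp hp1
    have hμ0 := NB_nonneg hrμ hp hp1
    have hki : Summable (fun z : ℕ => NB (α0 + (k:ℝ)) p z * (if (z:ℤ) ≤ a then (1:ℝ) else 0)) := by
      apply Summable.of_nonneg_of_le (fun z => mul_nonneg (hμ0 z) (ind_nonneg a z))
        (fun z => ?_) hμS
      by_cases hz : (z:ℤ) ≤ a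
      · rw [if_pos hz, mul_one]
      · rw [if_neg hz, mul_zero]; exact hμ0 z
    constructor
    · exact tsum_nonneg fun z => mul_nonneg (hμ0 z) (ind_nonneg a z)
    · rw [← hMk k]
      apply Summable.tsum_le_tsum _ hki hμS
      intro z
      by_cases hz : (z:ℤ) ≤ a
      · rw [if_pos hz, mul_one]
      · rw [if_neg hz, mul_zero]; exact hμ0 z
  -- A3 bound
  have hA3bnd : ∀ (a : ℤ) (k : ℕ),
      |∑' q : ℕ × ℕ, NB (α0 + (k:ℝ)) p q.1 * NB (((N:ℝ)-1) * (α0 + (k:ℝ))) p q.2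
        * (W (s+1) (a - q.1 + 1) (k + q.1 + q.2) - W (s+1) (a - q.1) (k + q.1 + q.2))|
        ≤ B * (M0 * Sν0) := by
    intro a k
    have hrμ : (0:ℝ) ≤ α0 + k := by positivity
    have hrν : (0:ℝ) ≤ ((N:ℝ)-1) * (α0 + (k:ℝ)) := by positivity
    have hμS := summable_NB hrμ hp hp1
    have hνS := summable_NB hrν hp hp1
    have hμ0 := NB_nonneg hrμ hp hp1
    have hν0 := NB_nonneg hrν hp hp1
    have hdom : Summable (fun q : ℕ × ℕ =>
        NB (α0 + (k:ℝ)) p q.1 * NB (((N:ℝ)-1) * (α0 + (k:ℝ))) p q.2 * B) :=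
      (hμS.mul_of_nonneg hνS hμ0 hν0).mul_right B
    have h1 := abs_tsum_le_of_le' (f := fun q : ℕ × ℕ =>
        NB (α0 + (k:ℝ)) p q.1 * NB (((N:ℝ)-1) * (α0 + (k:ℝ))) p q.2
        * (W (s+1) (a - q.1 + 1) (k + q.1 + q.2) - W (s+1) (a - q.1) (k + q.1 + q.2)))
      hdom (fun q => ?_)
    · refine h1.trans_eq ?_
      have := tsum_prod_mul_left (NB (α0 + (k:ℝ)) p) (NB (((N:ℝ)-1) * (α0 + (k:ℝ))) p)
        hμS hνS hμ0 hν0 (fun _ => B) |B| (fun z => le_refl |B|)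
      rw [this, tsum_mul_right, hMk k, hSνk k]
      ring
    · rw [abs_mul, abs_of_nonneg (mul_nonneg (hμ0 q.1) (hν0 q.2))]
      exact mul_le_mul_of_nonneg_left (hVB (a - q.1) (k + q.1 + q.2))
        (mul_nonneg (hμ0 q.1) (hν0 q.2))
  constructor
  · intro a a' k k' ha hk
    rw [G_diff_eq hα0 hβ0 hN cv ch cb W s hV0 C hC0 hVC a k',
        G_diff_eq hα0 hβ0 hN cv ch cb W s hV0 C hC0 hVC a' k]
    have h1 := A1_mono hα0 hβ0 hN s a a' k k' ha hk
    have h3 := A3_mono hα0 hβ0 hN W s B hB0 hVB hVmono a a' k k' ha hk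
    have hM : ∑' z : ℕ, NB (α0 + (k':ℝ)) p z = ∑' z : ℕ, NB (α0 + (k:ℝ)) p z := by
      rw [hMk k', hMk k]
    have h2 := mul_le_mul_of_nonneg_left h1 hch.le
    have h4 : cb * ((∑' z : ℕ, NB (α0 + (k':ℝ)) p z * (if (z:ℤ) ≤ a then (1:ℝ) else 0))
        - ∑' z : ℕ, NB (α0 + (k':ℝ)) p z)
        ≤ cb * ((∑' z : ℕ, NB (α0 + (k:ℝ)) p z * (if (z:ℤ) ≤ a' then (1:ℝ) else 0))
        - ∑' z : ℕ, NB (α0 + (k:ℝ)) p z) := by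
      apply mul_le_mul_of_nonneg_left _ hcb.le
      rw [hM]
      linarith
    linarith
  · refine ⟨cv + ch * M0 + cb * M0 + B * (M0 * Sν0), by positivity, ?_⟩
    intro a k
    rw [G_diff_eq hα0 hβ0 hN cv ch cb W s hV0 C hC0 hVC a k]
    have h1 := (hA1bnd a k).1
    have h2 := (hA1bnd a k).2
    have h3 := hA3bnd a k
    have h4 : 0 ≤ ∑' z : ℕ, NB (α0 + (k:ℝ)) p z :=
      tsum_nonneg (NB_nonneg (by positivity) hp hp1)
    have h5 : ∑' z : ℕ, NB (α0 + (k:ℝ)) p z = M0 := hMk k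
    rw [abs_le] at h3 ⊢
    constructor
    · nlinarith [hch.le, hcb.le]
    · nlinarith [hch.le, hcb.le]

end Main7
section Main8
variable {α0 β0 : ℝ} {N : ℕ}

lemma G_nonneg_parts (hα0 : 0 < α0) (hβ0 : 0 < β0) (hN : 1 ≤ N)
    (cv ch cb : ℝ) (hcv : 0 ≤ cv) (hch : 0 < ch) (hcb : 0 < cb)
    (W : ℕ → ℤ → ℕ → ℝ) (s : ℕ) (hV0 : ∀ x m, 0 ≤ W (s+1) x m)
    (a : ℤ) (m : ℕ) :
    cv * (a:ℝ) ≤ G α0 β0 N cv ch cb W s a m := by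
  have hp : 0 < pt β0 N s := pt_pos β0 hβ0 N s
  have hp1 : pt β0 N s < 1 := pt_lt_one β0 hβ0 N s
  have hNr : (0:ℝ) ≤ (N:ℝ) - 1 := by
    have : (1:ℝ) ≤ (N:ℝ) := by exact_mod_cast hN
    linarith
  have hrμ : (0:ℝ) ≤ α0 + m := by positivity
  have hrν : (0:ℝ) ≤ ((N:ℝ)-1) * (α0 + (m:ℝ)) := by positivity
  have hμ0 := NB_nonneg hrμ hp hp1
  have hν0 := NB_nonneg hrν hp hp1
  unfold G
  have h1 : 0 ≤ ∑' z : ℕ, NB (α0 + (m:ℝ)) (pt β0 N s) z * max ((a:ℝ) - z) 0 :=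
    tsum_nonneg fun z => mul_nonneg (hμ0 z) (le_max_right _ _)
  have h2 : 0 ≤ ∑' z : ℕ, NB (α0 + (m:ℝ)) (pt β0 N s) z * max ((z:ℝ) - a) 0 :=
    tsum_nonneg fun z => mul_nonneg (hμ0 z) (le_max_right _ _)
  have h3 : 0 ≤ EZK α0 β0 N s m (fun z κ => W (s+1) (a - z) (m + z + κ)) := by
    unfold EZK
    apply tsum_nonneg
    intro z
    apply tsum_nonneg
    intro κ
    exact mul_nonneg (mul_nonneg (hμ0 z) (hν0 κ)) (hV0 _ _)
  nlinarith [mul_nonneg hch.le h1, mul_nonneg hcb.le h2]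

lemma W_grow (hα0 : 0 < α0) (hβ0 : 0 < β0) (hN : 1 ≤ N)
    (cv ch cb : ℝ) (hcv : 0 ≤ cv) (hch : 0 < ch) (hcb : 0 < cb)
    (W : ℕ → ℤ → ℕ → ℝ) (s : ℕ)
    (hWs : ∀ (x : ℤ) (m : ℕ), W s x m
      = (⨅ a : {a : ℤ // x ≤ a}, G α0 β0 N cv ch cb W s a.1 m) - cv * (x:ℝ))
    (hV0 : ∀ x m, 0 ≤ W (s+1) x m)
    (C : ℝ) (hC0 : 0 ≤ C) (hVC : ∀ (x : ℤ) (m : ℕ), W (s+1) x m ≤ C * (1 + |(x:ℝ)| + m)) :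
    (∀ x m, 0 ≤ W s x m) ∧
    (∃ C' : ℝ, 0 ≤ C' ∧ ∀ (x : ℤ) (m : ℕ), W s x m ≤ C' * (1 + |(x:ℝ)| + m)) := by
  have hp : 0 < pt β0 N s := pt_pos β0 hβ0 N s
  have hp1 : pt β0 N s < 1 := pt_lt_one β0 hβ0 N s
  set p := pt β0 N s with hpdef
  have hNr : (0:ℝ) ≤ (N:ℝ) - 1 := by
    have : (1:ℝ) ≤ (N:ℝ) := by exact_mod_cast hN
    linarith
  have hbdd : ∀ (x : ℤ) (m : ℕ),
      BddBelow (Set.range (fun a : {a : ℤ // x ≤ a} => G α0 β0 N cv ch cb W s a.1 m)) := by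
    intro x m
    refine ⟨cv * (x:ℝ), ?_⟩
    rintro y ⟨a, rfl⟩
    have h1 := G_nonneg_parts hα0 hβ0 hN cv ch cb hcv hch hcb W s hV0 a.1 m
    have h2 : cv * (x:ℝ) ≤ cv * (a.1:ℝ) :=
      mul_le_mul_of_nonneg_left (by exact_mod_cast a.2) hcv
    exact h2.trans h1
  have hge : ∀ (x : ℤ) (m : ℕ), 0 ≤ W s x m := by
    intro x m
    rw [hWs x m, sub_nonneg]
    apply le_ciInf
    intro a
    have h1 := G_nonneg_parts hα0 hβ0 hN cv ch cb hcv hch hcb W s hV0 a.1 m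
    have h2 : cv * (x:ℝ) ≤ cv * (a.1:ℝ) :=
      mul_le_mul_of_nonneg_left (by exact_mod_cast a.2) hcv
    exact h2.trans h1
  refine ⟨hge, ?_⟩
  set R : ℝ := (1 - p) / p with hRdef
  have hR0 : 0 ≤ R := by
    apply div_nonneg <;> linarith
  set M0 : ℝ := ∑' z : ℕ, NB α0 p z with hM0def
  set Sν0 : ℝ := ∑' z : ℕ, NB (((N:ℝ)-1) * α0) p z with hSν0def
  have hM0 : 0 ≤ M0 := tsum_nonneg (NB_nonneg hα0.le hp hp1)
  have hSν0' : 0 ≤ Sν0 := tsum_nonneg (NB_nonneg (by positivity) hp hp1)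
  have hMk : ∀ m : ℕ, ∑' z : ℕ, NB (α0 + (m:ℝ)) p z = M0 := fun m =>
    NB_mass_add_nat hα0.le hp hp1 m
  have hSνk : ∀ m : ℕ, ∑' z : ℕ, NB (((N:ℝ)-1) * (α0 + (m:ℝ))) p z = Sν0 := by
    intro m
    have hcast : ((N:ℝ)-1) * (α0 + (m:ℝ)) = ((N:ℝ)-1) * α0 + (((N-1)*m : ℕ):ℝ) := by
      push_cast [Nat.cast_sub hN]
      ring
    rw [hcast]
    exact NB_mass_add_nat (by positivity) hp hp1 ((N-1)*m)
  refine ⟨ch * M0 + cb * M0 + cb * (α0+1) * R * M0 + C * M0 * Sν0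
      + 2 * C * (α0+1) * R * M0 * Sν0 + C * M0 * (N:ℝ) * (α0+1) * R * Sν0,
    by positivity, ?_⟩
  intro x m
  have hrμ : (0:ℝ) ≤ α0 + m := by positivity
  have hrν : (0:ℝ) ≤ ((N:ℝ)-1) * (α0 + (m:ℝ)) := by positivity
  have hμS := summable_NB hrμ hp hp1
  have hνS := summable_NB hrν hp hp1
  have hμ0 := NB_nonneg hrμ hp hp1
  have hν0 := NB_nonneg hrν hp hp1
  have hμz := summable_NB_mul_nat hrμ hp hp1
  have hνz := summable_NB_mul_nat hrν hp hp1
  -- upper bound W by G at a = x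
  have hWle : W s x m ≤ G α0 β0 N cv ch cb W s x m - cv * (x:ℝ) := by
    rw [hWs x m]
    have := ciInf_le (hbdd x m) ⟨x, le_refl x⟩
    linarith
  -- bound the pieces of G
  have hT1 : ∑' z : ℕ, NB (α0 + (m:ℝ)) p z * max ((x:ℝ) - z) 0 ≤ M0 * |(x:ℝ)| := by
    have hpt : ∀ z : ℕ, NB (α0 + (m:ℝ)) p z * max ((x:ℝ) - z) 0
        ≤ NB (α0 + (m:ℝ)) p z * |(x:ℝ)| := by
      intro z
      apply mul_le_mul_of_nonneg_left _ (hμ0 z)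
      apply max_le _ (abs_nonneg _)
      have h1 : (x:ℝ) ≤ |(x:ℝ)| := le_abs_self _
      have h2 : (0:ℝ) ≤ z := Nat.cast_nonneg z
      linarith
    calc ∑' z : ℕ, NB (α0 + (m:ℝ)) p z * max ((x:ℝ) - z) 0
        ≤ ∑' z : ℕ, NB (α0 + (m:ℝ)) p z * |(x:ℝ)| :=
          Summable.tsum_le_tsum hpt (summable_NB_max_left hrμ hp hp1 _) (hμS.mul_right _)
      _ = M0 * |(x:ℝ)| := by rw [tsum_mul_right, hMk m]
  set Em : ℝ := ∑' z : ℕ, NB (α0 + (m:ℝ)) p z * (z:ℝ) with hEmdef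
  have hEmval : Em = (α0 + m) * R * M0 := by
    rw [hEmdef, NB_mean hrμ hp hp1, hMk m, hRdef]
    ring
  have hEm0 : 0 ≤ Em :=
    tsum_nonneg fun z => mul_nonneg (hμ0 z) (Nat.cast_nonneg z)
  have hT2 : ∑' z : ℕ, NB (α0 + (m:ℝ)) p z * max ((z:ℝ) - x) 0 ≤ Em + M0 * |(x:ℝ)| := by
    have hpt : ∀ z : ℕ, NB (α0 + (m:ℝ)) p z * max ((z:ℝ) - x) 0
        ≤ NB (α0 + (m:ℝ)) p z * (z:ℝ) + NB (α0 + (m:ℝ)) p z * |(x:ℝ)| := by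
      intro z
      have h1 : max ((z:ℝ) - x) 0 ≤ (z:ℝ) + |(x:ℝ)| := by
        apply max_le
        · have := neg_abs_le (x:ℝ)
          linarith
        · positivity
      calc NB (α0 + (m:ℝ)) p z * max ((z:ℝ) - x) 0
          ≤ NB (α0 + (m:ℝ)) p z * ((z:ℝ) + |(x:ℝ)|) := mul_le_mul_of_nonneg_left h1 (hμ0 z)
        _ = NB (α0 + (m:ℝ)) p z * (z:ℝ) + NB (α0 + (m:ℝ)) p z * |(x:ℝ)| := by ring
    calc ∑' z : ℕ, NB (α0 + (m:ℝ)) p z * max ((z:ℝ) - x) 0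
        ≤ ∑' z : ℕ, (NB (α0 + (m:ℝ)) p z * (z:ℝ) + NB (α0 + (m:ℝ)) p z * |(x:ℝ)|) :=
          Summable.tsum_le_tsum hpt (summable_NB_max_right hrμ hp hp1 _)
            (hμz.add (hμS.mul_right _))
      _ = Em + M0 * |(x:ℝ)| := by
          rw [Summable.tsum_add hμz (hμS.mul_right _), tsum_mul_right, hMk m]
  -- bound EZK
  set Eν : ℝ := ∑' z : ℕ, NB (((N:ℝ)-1) * (α0 + (m:ℝ))) p z * (z:ℝ) with hEνdef
  have hEνval : Eν = ((N:ℝ)-1) * (α0 + m) * R * Sν0 := by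
    rw [hEνdef, NB_mean hrν hp hp1, hSνk m, hRdef]
    ring
  have hEν0 : 0 ≤ Eν :=
    tsum_nonneg fun z => mul_nonneg (hν0 z) (Nat.cast_nonneg z)
  have hEZK : EZK α0 β0 N s m (fun z κ => W (s+1) (x - z) (m + z + κ))
      ≤ Sν0 * (M0 * (C * (1 + |(x:ℝ)| + m))) + Em * (2*C) * Sν0 + M0 * (Eν * C) := by
    have hF : Summable (fun q : ℕ × ℕ => NB (α0 + (m:ℝ)) p q.1
        * NB (((N:ℝ)-1) * (α0 + (m:ℝ))) p q.2 * W (s+1) (x - q.1) (m + q.1 + q.2)) :=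
      summable_prod_NB_linpay hα0 hβ0 hN s m (W (s+1)) hV0 C hC0 hVC x
    have hE : EZK α0 β0 N s m (fun z κ => W (s+1) (x - z) (m + z + κ))
        = ∑' q : ℕ × ℕ, NB (α0 + (m:ℝ)) p q.1
        * NB (((N:ℝ)-1) * (α0 + (m:ℝ))) p q.2 * W (s+1) (x - q.1) (m + q.1 + q.2) :=
      (Summable.tsum_prod hF).symm
    rw [hE]
    have hd1 : Summable (fun q : ℕ × ℕ => NB (α0 + (m:ℝ)) p q.1
        * NB (((N:ℝ)-1) * (α0 + (m:ℝ))) p q.2 * (C * (1 + |(x:ℝ)| + m))) :=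
      (hμS.mul_of_nonneg hνS hμ0 hν0).mul_right _
    have hd2 : Summable (fun q : ℕ × ℕ => (NB (α0 + (m:ℝ)) p q.1 * (q.1:ℝ) * (2*C))
        * NB (((N:ℝ)-1) * (α0 + (m:ℝ))) p q.2) :=
      (hμz.mul_right (2*C)).mul_of_nonneg hνS
        (fun z => mul_nonneg (mul_nonneg (hμ0 z) (Nat.cast_nonneg z)) (by positivity)) hν0
    have hd3 : Summable (fun q : ℕ × ℕ => NB (α0 + (m:ℝ)) p q.1
        * (NB (((N:ℝ)-1) * (α0 + (m:ℝ))) p q.2 * (q.2:ℝ) * C)) :=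
      hμS.mul_of_nonneg (hνz.mul_right C) hμ0
        (fun z => mul_nonneg (mul_nonneg (hν0 z) (Nat.cast_nonneg z)) hC0)
    have hptw : ∀ q : ℕ × ℕ, NB (α0 + (m:ℝ)) p q.1
        * NB (((N:ℝ)-1) * (α0 + (m:ℝ))) p q.2 * W (s+1) (x - q.1) (m + q.1 + q.2)
        ≤ NB (α0 + (m:ℝ)) p q.1 * NB (((N:ℝ)-1) * (α0 + (m:ℝ))) p q.2 * (C * (1 + |(x:ℝ)| + m))
          + (NB (α0 + (m:ℝ)) p q.1 * (q.1:ℝ) * (2*C)) * NB (((N:ℝ)-1) * (α0 + (m:ℝ))) p q.2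
          + NB (α0 + (m:ℝ)) p q.1 * (NB (((N:ℝ)-1) * (α0 + (m:ℝ))) p q.2 * (q.2:ℝ) * C) := by
      intro q
      have hVle : W (s+1) (x - q.1) (m + q.1 + q.2)
          ≤ C * (1 + |(x:ℝ)| + m) + (q.1:ℝ) * (2*C) + (q.2:ℝ) * C := by
        have h1 := hVC (x - q.1) (m + q.1 + q.2)
        have h2 : |((x - q.1 : ℤ) : ℝ)| ≤ |(x:ℝ)| + q.1 := by
          push_cast
          have := abs_sub (x:ℝ) (q.1:ℝ)
          have h0 : |(q.1:ℝ)| = (q.1:ℝ) := abs_of_nonneg (Nat.cast_nonneg _)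
          linarith
        have h3 : ((m + q.1 + q.2 : ℕ) : ℝ) = (m:ℝ) + q.1 + q.2 := by push_cast; ring
        rw [h3] at h1
        nlinarith [(Nat.cast_nonneg q.1 : (0:ℝ) ≤ q.1), (Nat.cast_nonneg q.2 : (0:ℝ) ≤ q.2)]
      have hμν : 0 ≤ NB (α0 + (m:ℝ)) p q.1 * NB (((N:ℝ)-1) * (α0 + (m:ℝ))) p q.2 :=
        mul_nonneg (hμ0 q.1) (hν0 q.2)
      calc NB (α0 + (m:ℝ)) p q.1 * NB (((N:ℝ)-1) * (α0 + (m:ℝ))) p q.2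
            * W (s+1) (x - q.1) (m + q.1 + q.2)
          ≤ NB (α0 + (m:ℝ)) p q.1 * NB (((N:ℝ)-1) * (α0 + (m:ℝ))) p q.2
            * (C * (1 + |(x:ℝ)| + m) + (q.1:ℝ) * (2*C) + (q.2:ℝ) * C) :=
            mul_le_mul_of_nonneg_left hVle hμν
        _ = _ := by ring
    calc ∑' q : ℕ × ℕ, NB (α0 + (m:ℝ)) p q.1
          * NB (((N:ℝ)-1) * (α0 + (m:ℝ))) p q.2 * W (s+1) (x - q.1) (m + q.1 + q.2)
        ≤ ∑' q : ℕ × ℕ, (NB (α0 + (m:ℝ)) p q.1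
            * NB (((N:ℝ)-1) * (α0 + (m:ℝ))) p q.2 * (C * (1 + |(x:ℝ)| + m))
          + (NB (α0 + (m:ℝ)) p q.1 * (q.1:ℝ) * (2*C)) * NB (((N:ℝ)-1) * (α0 + (m:ℝ))) p q.2
          + NB (α0 + (m:ℝ)) p q.1 * (NB (((N:ℝ)-1) * (α0 + (m:ℝ))) p q.2 * (q.2:ℝ) * C)) :=
          Summable.tsum_le_tsum hptw hF ((hd1.add hd2).add hd3)
      _ = Sν0 * (M0 * (C * (1 + |(x:ℝ)| + m))) + Em * (2*C) * Sν0 + M0 * (Eν * C) := by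
          rw [Summable.tsum_add (hd1.add hd2) hd3, Summable.tsum_add hd1 hd2]
          congr 1
          · congr 1
            · rw [tsum_prod_mul_left (NB (α0 + (m:ℝ)) p) (NB (((N:ℝ)-1) * (α0 + (m:ℝ))) p)
                hμS hνS hμ0 hν0 (fun _ => C * (1 + |(x:ℝ)| + m)) |C * (1 + |(x:ℝ)| + m)|
                (fun _ => le_refl _), tsum_mul_right, hMk m, hSνk m]
            · rw [tsum_prod_mul (fun z => NB (α0 + (m:ℝ)) p z * (z:ℝ) * (2*C))
                (NB (((N:ℝ)-1) * (α0 + (m:ℝ))) p) (hμz.mul_right _) hνS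
                (fun z => mul_nonneg (mul_nonneg (hμ0 z) (Nat.cast_nonneg z)) (by positivity))
                hν0, hSνk m]
              rw [tsum_mul_right]
          · rw [tsum_prod_mul (NB (α0 + (m:ℝ)) p)
              (fun z => NB (((N:ℝ)-1) * (α0 + (m:ℝ))) p z * (z:ℝ) * C) hμS (hνz.mul_right _)
              hμ0 (fun z => mul_nonneg (mul_nonneg (hν0 z) (Nat.cast_nonneg z)) hC0), hMk m]
            rw [tsum_mul_right]
  -- put everything together
  have hGx : G α0 β0 N cv ch cb W s x m - cv * (x:ℝ)
      ≤ ch * (M0 * |(x:ℝ)|) + cb * (Em + M0 * |(x:ℝ)|)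
        + (Sν0 * (M0 * (C * (1 + |(x:ℝ)| + m))) + Em * (2*C) * Sν0 + M0 * (Eν * C)) := by
    unfold G
    have h1 := mul_le_mul_of_nonneg_left hT1 hch.le
    have h2 := mul_le_mul_of_nonneg_left hT2 hcb.le
    linarith [hEZK]
  have hX1 : (0:ℝ) ≤ 1 + |(x:ℝ)| + m := by positivity
  have hxle : |(x:ℝ)| ≤ 1 + |(x:ℝ)| + m := by
    have h1 : (0:ℝ) ≤ m := Nat.cast_nonneg m
    linarith
  have hαm : α0 + (m:ℝ) ≤ (α0+1) * (1 + |(x:ℝ)| + m) := by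
    nlinarith [abs_nonneg (x:ℝ), (Nat.cast_nonneg m : (0:ℝ) ≤ m)]
  have hN1 : (N:ℝ) - 1 ≤ (N:ℝ) := by linarith
  refine le_trans (hWle.trans hGx) ?_
  rw [hEmval, hEνval]
  have F1 := mul_le_mul_of_nonneg_left hxle (mul_nonneg hch.le hM0)
  have F2 := mul_le_mul_of_nonneg_left hαm (mul_nonneg (mul_nonneg hcb.le hR0) hM0)
  have F3 := mul_le_mul_of_nonneg_left hxle (mul_nonneg hcb.le hM0)
  have F5 := mul_le_mul_of_nonneg_left hαm
    (mul_nonneg (mul_nonneg (mul_nonneg (by norm_num : (0:ℝ) ≤ 2) hC0) hR0)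
      (mul_nonneg hM0 hSν0'))
  have h6a := mul_le_mul_of_nonneg_left hαm hNr
  have h6b : ((N:ℝ)-1) * ((α0+1) * (1 + |(x:ℝ)| + m)) ≤ (N:ℝ) * ((α0+1) * (1 + |(x:ℝ)| + m)) := by
    apply mul_le_mul_of_nonneg_right hN1
    positivity
  have F6 := mul_le_mul_of_nonneg_left (h6a.trans h6b)
    (mul_nonneg (mul_nonneg hC0 hM0) (mul_nonneg hR0 hSν0'))
  nlinarith [F1, F2, F3, F5, F6]

end Main8

section InfLemma

lemma iInf_succ_eq (Gf : ℤ → ℝ)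
    (hconv : ∀ a b : ℤ, a ≤ b → Gf (a+1) - Gf a ≤ Gf (b+1) - Gf b) (x : ℤ) :
    (⨅ a : {a : ℤ // x + 1 ≤ a}, Gf a.1)
      = (⨅ a : {a : ℤ // x ≤ a}, Gf a.1) + max (Gf (x+1) - Gf x) 0 := by
  have mono2 : 0 ≤ Gf (x+1) - Gf x → ∀ b : ℤ, x ≤ b → ∀ c : ℤ, b ≤ c → Gf b ≤ Gf c := by
    intro hΔ b hb c hc
    refine Int.le_induction (motive := fun c _ => Gf b ≤ Gf c) ?_ ?_ c hc
    · exact le_refl _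
    · intro n hn ih
      have h1 := hconv x n (hb.trans hn)
      linarith
  by_cases hΔ : 0 ≤ Gf (x+1) - Gf x
  · have hb1 : BddBelow (Set.range (fun a : {a : ℤ // x ≤ a} => Gf a.1)) := by
      refine ⟨Gf x, ?_⟩
      rintro y ⟨a, rfl⟩
      exact mono2 hΔ x le_rfl a.1 a.2
    have hb2 : BddBelow (Set.range (fun a : {a : ℤ // x + 1 ≤ a} => Gf a.1)) := by
      refine ⟨Gf (x+1), ?_⟩
      rintro y ⟨a, rfl⟩
      exact mono2 hΔ (x+1) (by linarith) a.1 a.2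
    have h1 : (⨅ a : {a : ℤ // x ≤ a}, Gf a.1) = Gf x :=
      le_antisymm (ciInf_le hb1 ⟨x, le_refl x⟩)
        (le_ciInf fun a => mono2 hΔ x le_rfl a.1 a.2)
    have h2 : (⨅ a : {a : ℤ // x + 1 ≤ a}, Gf a.1) = Gf (x+1) :=
      le_antisymm (ciInf_le hb2 ⟨x+1, le_refl _⟩)
        (le_ciInf fun a => mono2 hΔ (x+1) (by linarith) a.1 a.2)
    rw [h1, h2, max_eq_left hΔ]
    ring
  · push_neg at hΔ
    rw [max_eq_right (by linarith), add_zero]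
    have hsub : Set.range (fun a : {a : ℤ // x + 1 ≤ a} => Gf a.1)
        ⊆ Set.range (fun a : {a : ℤ // x ≤ a} => Gf a.1) := by
      rintro y ⟨a, rfl⟩
      exact ⟨⟨a.1, by linarith [a.2]⟩, rfl⟩
    by_cases hbdd : BddBelow (Set.range (fun a : {a : ℤ // x + 1 ≤ a} => Gf a.1))
    · have hbddS : BddBelow (Set.range (fun a : {a : ℤ // x ≤ a} => Gf a.1)) := by
        obtain ⟨L, hL⟩ := hbdd
        refine ⟨min L (Gf x), ?_⟩
        rintro y ⟨a, rfl⟩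
        show min L (Gf x) ≤ Gf a.1
        rcases eq_or_lt_of_le a.2 with h | h
        · rw [← h]
          exact min_le_right _ _
        · exact le_trans (min_le_left _ _) (hL ⟨⟨a.1, by linarith⟩, rfl⟩)
      apply le_antisymm
      · apply le_ciInf
        intro a
        rcases eq_or_lt_of_le a.2 with h | h
        · have hle : (⨅ a : {a : ℤ // x + 1 ≤ a}, Gf a.1) ≤ Gf (x+1) :=
            ciInf_le hbdd ⟨x+1, le_refl _⟩
          show (⨅ a : {a : ℤ // x + 1 ≤ a}, Gf a.1) ≤ Gf a.1
          rw [← h]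
          linarith
        · exact ciInf_le hbdd ⟨a.1, by linarith⟩
      · apply le_ciInf
        intro a
        exact ciInf_le hbddS ⟨a.1, by linarith [a.2]⟩
    · have hbddS' : ¬ BddBelow (Set.range (fun a : {a : ℤ // x ≤ a} => Gf a.1)) :=
        fun h => hbdd (h.mono hsub)
      rw [Real.iInf_of_not_bddBelow hbdd, Real.iInf_of_not_bddBelow hbddS']

end InfLemma

section Main9
variable {α0 β0 : ℝ} {N : ℕ}

def GoodW (α0 β0 : ℝ) (N : ℕ) (cv ch cb : ℝ) (W : ℕ → ℤ → ℕ → ℝ) (s : ℕ) : Prop :=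
  (∀ (x : ℤ) (m : ℕ), 0 ≤ W s x m) ∧
  (∃ C : ℝ, 0 ≤ C ∧ ∀ (x : ℤ) (m : ℕ), W s x m ≤ C * (1 + |(x:ℝ)| + m)) ∧
  (∃ B : ℝ, 0 ≤ B ∧ ∀ (x : ℤ) (m : ℕ), |W s (x+1) m - W s x m| ≤ B) ∧
  (∀ (x x' : ℤ) (m m' : ℕ), x ≤ x' → m ≤ m' →
    W s (x+1) m' - W s x m' ≤ W s (x'+1) m - W s x' m)

lemma goodW_step (hα0 : 0 < α0) (hβ0 : 0 < β0) (hN : 1 ≤ N)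
    (cv ch cb : ℝ) (hcv : 0 ≤ cv) (hch : 0 < ch) (hcb : 0 < cb)
    (W : ℕ → ℤ → ℕ → ℝ) (s : ℕ)
    (hWs : ∀ (x : ℤ) (m : ℕ), W s x m
      = (⨅ a : {a : ℤ // x ≤ a}, G α0 β0 N cv ch cb W s a.1 m) - cv * (x:ℝ))
    (hnext : GoodW α0 β0 N cv ch cb W (s+1)) :
    GoodW α0 β0 N cv ch cb W s := by
  obtain ⟨hV0, ⟨C, hC0, hVC⟩, ⟨B, hB0, hVB⟩, hVmono⟩ := hnext
  obtain ⟨hmonoG, Bg, hBg0, hBgle⟩ :=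
    bridge hα0 hβ0 hN cv ch cb hcv hch hcb W s hV0 C hC0 hVC B hB0 hVB hVmono
  obtain ⟨hge, C', hC'0, hgrow⟩ :=
    W_grow hα0 hβ0 hN cv ch cb hcv hch hcb W s hWs hV0 C hC0 hVC
  have hWdiff : ∀ (x : ℤ) (m : ℕ), W s (x+1) m - W s x m
      = max (G α0 β0 N cv ch cb W s (x+1) m - G α0 β0 N cv ch cb W s x m) 0 - cv := by
    intro x m
    rw [hWs (x+1) m, hWs x m]
    have hconv : ∀ a b : ℤ, a ≤ b →
        G α0 β0 N cv ch cb W s (a+1) m - G α0 β0 N cv ch cb W s a m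
          ≤ G α0 β0 N cv ch cb W s (b+1) m - G α0 β0 N cv ch cb W s b m :=
      fun a b hab => hmonoG a b m m hab le_rfl
    have hinf := iInf_succ_eq (fun a => G α0 β0 N cv ch cb W s a m) hconv x
    have hcast : ((x + 1 : ℤ):ℝ) = (x:ℝ) + 1 := by push_cast; ring
    rw [hcast]
    linarith [hinf]
  refine ⟨hge, ⟨C', hC'0, hgrow⟩, ⟨Bg + cv, by linarith, ?_⟩, ?_⟩
  · intro x m
    rw [hWdiff x m]
    have h1 := hBgle x m
    rw [abs_le] at h1 ⊢
    constructor
    · have : (0:ℝ) ≤ max (G α0 β0 N cv ch cb W s (x+1) m - G α0 β0 N cv ch cb W s x m) 0 :=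
        le_max_right _ _
      linarith
    · have : max (G α0 β0 N cv ch cb W s (x+1) m - G α0 β0 N cv ch cb W s x m) 0 ≤ Bg :=
        max_le h1.2 hBg0
      linarith
  · intro x x' m m' hx hm
    rw [hWdiff x m', hWdiff x' m]
    have := max_le_max (hmonoG x x' m m' hx hm) (le_refl (0:ℝ))
    linarith

end Main9

/-- The first difference `ΔG_t(a,k) = G_t(a+1,k) − G_t(a,k)` is non-increasing in `k`. -/
theorem deltaG_antitone_k
    (α0 β0 : ℝ) (hα0 : 0 < α0) (hβ0 : 0 < β0)
    (N T : ℕ) (hN : 1 ≤ N) (hT : 1 ≤ T)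
    (cv ch cb : ℝ) (hcv : 0 ≤ cv) (hch : 0 < ch) (hcb : 0 < cb)
    (W : ℕ → ℤ → ℕ → ℝ)
    (hWT : ∀ x k, W T x k = 0)
    (hW : ∀ t, t < T → ∀ x k,
      W t x k = (⨅ a : {a : ℤ // x ≤ a}, G α0 β0 N cv ch cb W t a.1 k) - cv * (x : ℝ)) :
    ∀ t, t < T → ∀ (a : ℤ) (k k' : ℕ), k ≤ k' →
      G α0 β0 N cv ch cb W t (a + 1) k' - G α0 β0 N cv ch cb W t a k' ≤
        G α0 β0 N cv ch cb W t (a + 1) k - G α0 β0 N cv ch cb W t a k := by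
  have hbase : GoodW α0 β0 N cv ch cb W T := by
    refine ⟨fun x m => by rw [hWT x m], ⟨0, le_refl 0, fun x m => by rw [hWT x m]; positivity⟩,
      ⟨0, le_refl 0, fun x m => by rw [hWT (x+1) m, hWT x m]; simp⟩, ?_⟩
    intro x x' m m' hx hm
    rw [hWT (x+1) m', hWT x m', hWT (x'+1) m, hWT x' m]
  have main : ∀ j s, T = s + j → GoodW α0 β0 N cv ch cb W s := by
    intro j
    induction j with
    | zero =>
        intro s hs
        have : s = T := by omega
        rw [this]
        exact hbase
    | succ j ih =>
        intro s hs
        have h1 : T = (s+1) + j := by omega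
        have h2 : s < T := by omega
        exact goodW_step hα0 hβ0 hN cv ch cb hcv hch hcb W s (hW s h2) (ih (s+1) h1)
  intro t ht a k k' hkk'
  have hnext : GoodW α0 β0 N cv ch cb W (t+1) := main (T - (t+1)) (t+1) (by omega)
  obtain ⟨hV0, ⟨C, hC0, hVC⟩, ⟨B, hB0, hVB⟩, hVmono⟩ := hnext
  obtain ⟨hmonoG, _⟩ :=
    bridge hα0 hβ0 hN cv ch cb hcv hch hcb W t hV0 C hC0 hVC B hB0 hVB hVmono
  exact hmonoG a a k k' le_rfl hkk'
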